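/- arXiv:1111.5968 — 3 statements merged into one kernel-verified Lean document; each statement's English description precedes it below -/
import Mathlib

section
/- Let d ∈ ℕ, β ∈ ℝ_+^d, α ∈ ℝ^d, and assume 𝔐(β^{-1}α) > 0, where β^{-1}α = (α_1/β_1, …, α_d/β_d). Then there exist constants c₁, c₂ > 0 depending only on d, α, β such that for every r ∈ ℕ: c₁ · 2^{𝔐(β^{-1}α) r} · r^{𝔆(β^{-1}α) − 1} ≤ Σ_{κ ∈ ℤ_+^d, (κ,β) ≤ r} 2^{(κ,α)} ≤ c₂ · 2^{𝔐(β^{-1}α) r} · r^{𝔆(β^{-1}α) − 1}. -/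
open Finset

private lemma aux_update_sum {d : ℕ} (y : Fin d → ℕ) (j0 : Fin d) (hy : y j0 = 0)
    (k : ℕ) (c : Fin d → ℝ) :
    ∑ j, ((Function.update y j0 k) j : ℝ) * c j = (∑ j, (y j : ℝ) * c j) + (k : ℝ) * c j0 := by
  have h : ∀ x, ((Function.update y j0 k) x : ℝ) * c x
      = Function.update (fun x => (y x : ℝ) * c x) j0 ((k : ℝ) * c j0) x := by
    intro x
    rcases eq_or_ne x j0 with h | h
    · subst h; simp
    · simp [Function.update_of_ne h]
  rw [Finset.sum_congr rfl fun x _ => h x,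
    Finset.sum_update_of_mem (Finset.mem_univ j0),
    Finset.sum_eq_sum_sdiff_singleton_add (Finset.mem_univ j0) (fun x => (y x : ℝ) * c x)]
  rw [hy]
  push_cast
  ring

private lemma aux_rpow_nat (a : ℝ) (k : ℕ) : (2 : ℝ) ^ ((k : ℝ) * a) = ((2 : ℝ) ^ a) ^ k := by
  rw [mul_comm, Real.rpow_mul (by norm_num), Real.rpow_natCast]

private lemma aux_geom_le (x : ℝ) (h0 : 0 ≤ x) (h1 : x < 1) (N : ℕ) :
    ∑ k ∈ Finset.range N, x ^ k ≤ (1 - x)⁻¹ := by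
  have hx1 : x ≠ 1 := ne_of_lt h1
  have h1x : (0:ℝ) < 1 - x := by linarith
  rw [geom_sum_eq hx1]
  calc (x ^ N - 1) / (x - 1) = (1 - x ^ N) / (1 - x) := by
        rw [← neg_div_neg_eq]; ring_nf
    _ ≤ 1 / (1 - x) := by
        gcongr
        have := pow_nonneg h0 N
        linarith
    _ = (1 - x)⁻¹ := one_div _

private lemma aux_geom_top (q : ℝ) (h : 1 < q) (N : ℕ) :
    ∑ k ∈ Finset.range N, q ^ k ≤ q ^ N / (q - 1) := by
  have hq1 : q ≠ 1 := ne_of_gt h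
  rw [geom_sum_eq hq1]
  gcongr
  · linarith

set_option maxHeartbeats 1000000 in
/-- Lemma 1.2.2.  Let `β ∈ ℝ_+^d`, `α ∈ ℝ^d` with `𝔐(β⁻¹α) = M > 0`, and let
`𝔆 = card {j : α_j/β_j = M}`.  Then there are `c₁, c₂ > 0` (depending on `d, α, β`) with
`c₁ 2^{M r} r^{𝔆−1} ≤ Σ_{κ ∈ ℤ_+^d, (κ,β) ≤ r} 2^{(κ,α)} ≤ c₂ 2^{M r} r^{𝔆−1}` for all `r ∈ ℕ`,
`r ≥ 1`. -/
theorem stmt_1 (d : ℕ) (hd : 0 < d) (α β : Fin d → ℝ) (hβ : ∀ j, 0 < β j)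
    (M : ℝ) (hM : IsGreatest (Set.range fun j => α j / β j) M) (hMpos : 0 < M)
    (𝔆 : ℕ) (h𝔆 : 𝔆 = (Finset.univ.filter fun j => α j / β j = M).card) :
    ∃ c₁ c₂ : ℝ, 0 < c₁ ∧ 0 < c₂ ∧ ∀ r : ℕ, 0 < r →
      c₁ * (2 : ℝ) ^ (M * r) * (r : ℝ) ^ (𝔆 - 1) ≤
        (∑' κ : Fin d → ℕ,
          if (∑ j, (κ j : ℝ) * β j) ≤ (r : ℝ) then (2 : ℝ) ^ (∑ j, (κ j : ℝ) * α j) else 0) ∧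
      (∑' κ : Fin d → ℕ,
          if (∑ j, (κ j : ℝ) * β j) ≤ (r : ℝ) then (2 : ℝ) ^ (∑ j, (κ j : ℝ) * α j) else 0) ≤
        c₂ * (2 : ℝ) ^ (M * r) * (r : ℝ) ^ (𝔆 - 1) := by
  have : Nonempty (Fin d) := ⟨⟨0, hd⟩⟩
  set E : Finset (Fin d) := Finset.univ.filter (fun j => α j / β j = M) with hE
  obtain ⟨j0, hj0⟩ := hM.1
  have hβj0 := hβ j0
  have hαE : ∀ j, α j / β j = M → α j = M * β j := by
    intro j hj
    rw [div_eq_iff (hβ j).ne'] at hj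
    linarith [hj]
  have hαj0 : α j0 = M * β j0 := hαE j0 hj0
  have hj0E : j0 ∈ E := by simp [hE, hj0]
  have h𝔖 : 𝔆 - 1 = (E.erase j0).card := by
    rw [Finset.card_erase_of_mem hj0E, h𝔆]
  have hδpos : ∀ j, j ∉ E → 0 < M * β j - α j := by
    intro j hj
    have h2 : ¬ (α j / β j = M) := by simpa [hE] using hj
    have h3 : α j / β j ≤ M := hM.2 ⟨j, rfl⟩
    have h4 : α j / β j < M := lt_of_le_of_ne h3 h2
    rw [div_lt_iff₀ (hβ j)] at h4
    linarith
  have hne : (Finset.univ : Finset (Fin d)).Nonempty := Finset.univ_nonempty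
  set b : ℝ := Finset.univ.inf' hne β with hbdef
  have hb : 0 < b := by
    rw [hbdef, Finset.lt_inf'_iff]
    exact fun j _ => hβ j
  have hble : ∀ j, b ≤ β j := fun j => Finset.inf'_le β (Finset.mem_univ j)
  set B : ℝ := ∑ j, β j with hBdef
  have hB : 0 < B := Finset.sum_pos (fun j _ => hβ j) hne
  set q : ℝ := (2 : ℝ) ^ (M * β j0) with hq
  have hq1 : (1 : ℝ) < q := by
    have : (2:ℝ) ^ (0:ℝ) < q := by
      rw [hq]
      exact Real.rpow_lt_rpow_of_exponent_lt one_lt_two (mul_pos hMpos hβj0)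
    simpa using this
  set C4 : ℝ := ∏ j, (if α j / β j = M then 1 else (1 - (2:ℝ) ^ (-(M * β j - α j)))⁻¹) with hC4
  have hxlt1 : ∀ j, j ∉ E → (2:ℝ) ^ (-(M * β j - α j)) < 1 := by
    intro j hj
    exact Real.rpow_lt_one_of_one_lt_of_neg one_lt_two (by linarith [hδpos j hj])
  have hC4pos : 0 < C4 := by
    rw [hC4]
    apply Finset.prod_pos
    intro j _
    split
    · norm_num
    · next h =>
      have hj : j ∉ E := by simp [hE, h]
      exact inv_pos.2 (by linarith [hxlt1 j hj])
  refine ⟨(B⁻¹) ^ (𝔆 - 1) * (2:ℝ) ^ (-(M * β j0)),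
    (q / (q - 1)) * ((1/b + 2) ^ (𝔆 - 1) * C4), ?_, ?_, ?_⟩
  · have h1 : (0:ℝ) < B⁻¹ := inv_pos.2 hB
    have h2 : (0:ℝ) < (2:ℝ) ^ (-(M * β j0)) := Real.rpow_pos_of_pos two_pos _
    positivity
  · have h1 : (0:ℝ) < q - 1 := by linarith
    have h2 : (0:ℝ) < 1/b + 2 := by positivity
    have h3 : (0:ℝ) < q := by linarith
    positivity
  intro r hr
  have hrR : (1:ℝ) ≤ (r:ℝ) := by exact_mod_cast hr
  set f : (Fin d → ℕ) → ℝ := fun κ =>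
    if (∑ j, (κ j : ℝ) * β j) ≤ (r : ℝ) then (2 : ℝ) ^ (∑ j, (κ j : ℝ) * α j) else 0 with hfdef
  have hf0 : ∀ κ, 0 ≤ f κ := by
    intro κ
    simp only [hfdef]
    split
    · positivity
    · exact le_refl 0
  set n : ℕ := ⌈(r:ℝ)/b⌉₊ with hn
  set A : Finset (Fin d → ℕ) := Fintype.piFinset (fun _ => Finset.range (n+1)) with hA
  have hsupp : ∀ κ ∉ A, f κ = 0 := by
    intro κ hκ
    rw [hA, Fintype.mem_piFinset] at hκ
    push_neg at hκ
    obtain ⟨j, hj⟩ := hκ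
    rw [Finset.mem_range, not_lt] at hj
    have h1 : (r:ℝ)/b < (κ j : ℝ) := by
      calc (r:ℝ)/b ≤ n := Nat.le_ceil _
        _ < κ j := by exact_mod_cast hj
    have h2 : (r:ℝ) < (κ j:ℝ) * β j := by
      rw [div_lt_iff₀ hb] at h1
      calc (r:ℝ) < (κ j:ℝ) * b := h1
        _ ≤ (κ j:ℝ) * β j := mul_le_mul_of_nonneg_left (hble j) (Nat.cast_nonneg _)
    have h3 : (κ j:ℝ) * β j ≤ ∑ j', (κ j':ℝ) * β j' :=
      Finset.single_le_sum (f := fun j' => (κ j':ℝ) * β j') (fun i _ => mul_nonneg (Nat.cast_nonneg _) (hβ i).le) (Finset.mem_univ j)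
    simp only [hfdef]
    rw [if_neg (by linarith)]
  have hsummable : Summable f := summable_of_ne_finset_zero hsupp
  clear_value b B q C4 f n A
  have htsum : (∑' κ, f κ) = ∑ κ ∈ A, f κ := tsum_eq_sum hsupp
  constructor
  · -- LOWER BOUND
    set m : ℕ := ⌊(r:ℝ)/B⌋₊ with hm
    set T : Finset (Fin d → ℕ) :=
      Fintype.piFinset (fun j => if j ∈ E.erase j0 then Finset.range (m+1) else {0}) with hT
    set Φ : (Fin d → ℕ) → (Fin d → ℕ) :=
      fun y => Function.update y j0 (⌊((r:ℝ) - ∑ j, (y j:ℝ) * β j)/β j0⌋₊) with hΦ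
    have hTmem : ∀ y ∈ T, (y j0 = 0 ∧ (∀ j, j ∉ E.erase j0 → y j = 0) ∧ ∀ j, y j ≤ m) := by
      intro y hy
      rw [hT, Fintype.mem_piFinset] at hy
      refine ⟨?_, ?_, ?_⟩
      · have := hy j0
        rw [if_neg (Finset.notMem_erase j0 E)] at this
        simpa using this
      · intro j hj
        have := hy j
        rw [if_neg hj] at this
        simpa using this
      · intro j
        have := hy j
        split at this
        · exact Nat.lt_succ_iff.1 (Finset.mem_range.1 this)
        · simp at this; omega
    have hyβ : ∀ y ∈ T, (∑ j, (y j:ℝ) * β j) ≤ (r:ℝ) := by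
      intro y hy
      obtain ⟨-, -, h3⟩ := hTmem y hy
      calc ∑ j, (y j:ℝ) * β j ≤ ∑ j, (m:ℝ) * β j := by
            apply Finset.sum_le_sum
            intro j _
            exact mul_le_mul_of_nonneg_right (by exact_mod_cast h3 j) (hβ j).le
        _ = m * B := by rw [← Finset.mul_sum, hBdef]
        _ ≤ ((r:ℝ)/B) * B := mul_le_mul_of_nonneg_right (Nat.floor_le (div_nonneg (Nat.cast_nonneg _) hB.le)) hB.le
        _ = r := by field_simp
    have hyβ0 : ∀ y : Fin d → ℕ, (0:ℝ) ≤ ∑ j, (y j:ℝ) * β j := by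
      intro y
      exact Finset.sum_nonneg fun j _ => mul_nonneg (Nat.cast_nonneg _) (hβ j).le
    have hΦβ : ∀ y ∈ T, (∑ j, ((Φ y) j : ℝ) * β j) ≤ (r:ℝ)
         ∧ M * ((r:ℝ) - β j0) ≤ M * (∑ j, ((Φ y) j : ℝ) * β j) := by
      intro y hy
      obtain ⟨h1, -, -⟩ := hTmem y hy
      have hs := hyβ y hy
      have hupdate := aux_update_sum y j0 h1 (⌊((r:ℝ) - ∑ j, (y j:ℝ) * β j)/β j0⌋₊) β
      have hknn : (0:ℝ) ≤ ((r:ℝ) - ∑ j, (y j:ℝ) * β j)/β j0 :=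
        div_nonneg (by linarith) hβj0.le
      have hkle : (⌊((r:ℝ) - ∑ j, (y j:ℝ) * β j)/β j0⌋₊ : ℝ) * β j0
          ≤ (r:ℝ) - ∑ j, (y j:ℝ) * β j := by
        have := Nat.floor_le hknn
        calc (⌊((r:ℝ) - ∑ j, (y j:ℝ) * β j)/β j0⌋₊ : ℝ) * β j0
            ≤ (((r:ℝ) - ∑ j, (y j:ℝ) * β j)/β j0) * β j0 :=
              mul_le_mul_of_nonneg_right this hβj0.le
          _ = (r:ℝ) - ∑ j, (y j:ℝ) * β j := by field_simp
      have hkgt : (r:ℝ) - ∑ j, (y j:ℝ) * β j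
          < ((⌊((r:ℝ) - ∑ j, (y j:ℝ) * β j)/β j0⌋₊ : ℝ) + 1) * β j0 := by
        have h5 := Nat.lt_floor_add_one (((r:ℝ) - ∑ j, (y j:ℝ) * β j)/β j0)
        rw [div_lt_iff₀ hβj0] at h5
        exact h5
      constructor
      · rw [hΦ]
        simp only
        rw [hupdate]
        linarith
      · rw [hΦ]
        simp only
        rw [hupdate]
        have : (r:ℝ) - β j0 ≤ (∑ j, (y j:ℝ) * β j)
            + (⌊((r:ℝ) - ∑ j, (y j:ℝ) * β j)/β j0⌋₊ : ℝ) * β j0 := by nlinarith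
        exact mul_le_mul_of_nonneg_left this hMpos.le
    have hΦsupp : ∀ y ∈ T, ∀ j, (Φ y) j ≠ 0 → j ∈ E := by
      intro y hy j hj
      rcases eq_or_ne j j0 with rfl | hjne
      · exact hj0E
      · rw [hΦ] at hj
        simp only at hj
        rw [Function.update_of_ne hjne] at hj
        obtain ⟨-, h2, -⟩ := hTmem y hy
        by_contra hjE
        exact hj (h2 j (fun hmem => hjE (Finset.mem_of_mem_erase hmem)))
    have hΦval : ∀ y ∈ T, (2:ℝ) ^ (M * ((r:ℝ) - β j0)) ≤ f (Φ y) := by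
      intro y hy
      have hβle := (hΦβ y hy).1
      have hβgt := (hΦβ y hy).2
      have hαsum : (∑ j, ((Φ y) j:ℝ) * α j) = M * (∑ j, ((Φ y) j:ℝ) * β j) := by
        rw [Finset.mul_sum]
        apply Finset.sum_congr rfl
        intro j _
        rcases Nat.eq_zero_or_pos ((Φ y) j) with h0 | hpos
        · rw [h0]; simp
        · have hjE : j ∈ E := hΦsupp y hy j (by omega)
          have hjM : α j / β j = M := by
            have := Finset.mem_filter.1 (hE ▸ hjE)
            exact this.2
          rw [hαE j hjM]
          ring
      simp only [hfdef]
      rw [if_pos hβle, hαsum]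
      exact Real.rpow_le_rpow_of_exponent_le one_le_two hβgt
    have hΦinj : ∀ y ∈ T, ∀ y' ∈ T, Φ y = Φ y' → y = y' := by
      intro y hy y' hy' heq
      funext j
      rcases eq_or_ne j j0 with rfl | hjne
      · rw [(hTmem y hy).1, (hTmem y' hy').1]
      · have := congrFun heq j
        rw [hΦ] at this
        simp only at this
        rwa [Function.update_of_ne hjne, Function.update_of_ne hjne] at this
    have hcardT : T.card = (m+1) ^ (𝔆 - 1) := by
      rw [hT, Fintype.card_piFinset]
      calc ∏ j, (if j ∈ E.erase j0 then Finset.range (m+1) else ({0} : Finset ℕ)).card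
          = ∏ j, (if j ∈ E.erase j0 then (m+1) else 1) := by
            apply Finset.prod_congr rfl
            intro j _
            split <;> simp
        _ = (m+1) ^ (E.erase j0).card := by
            rw [Finset.prod_ite_mem, Finset.univ_inter, Finset.prod_const]
        _ = (m+1) ^ (𝔆 - 1) := by rw [h𝔖]
    have step1 : ∑ κ ∈ T.image Φ, f κ ≤ ∑' κ, f κ :=
      Summable.sum_le_tsum _ (fun κ _ => hf0 κ) hsummable
    have step2 : ∑ κ ∈ T.image Φ, f κ = ∑ y ∈ T, f (Φ y) :=
      Finset.sum_image hΦinj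
    have step3 : ((m:ℝ)+1) ^ (𝔆-1) * (2:ℝ) ^ (M * ((r:ℝ) - β j0)) ≤ ∑ y ∈ T, f (Φ y) := by
      calc ((m:ℝ)+1) ^ (𝔆-1) * (2:ℝ) ^ (M * ((r:ℝ) - β j0))
          = (T.card : ℝ) * (2:ℝ) ^ (M * ((r:ℝ) - β j0)) := by
            rw [hcardT]; push_cast; ring
        _ = ∑ _y ∈ T, (2:ℝ) ^ (M * ((r:ℝ) - β j0)) := by
            rw [Finset.sum_const, nsmul_eq_mul]
        _ ≤ ∑ y ∈ T, f (Φ y) := Finset.sum_le_sum (fun y hy => hΦval y hy)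
    have hml : (r:ℝ)/B < (m:ℝ) + 1 := Nat.lt_floor_add_one _
    have hmpow : (B⁻¹) ^ (𝔆-1) * (r:ℝ) ^ (𝔆-1) ≤ ((m:ℝ)+1) ^ (𝔆-1) := by
      calc (B⁻¹) ^ (𝔆-1) * (r:ℝ) ^ (𝔆-1) = ((r:ℝ)/B) ^ (𝔆-1) := by
            rw [← mul_pow]; ring_nf
        _ ≤ ((m:ℝ)+1) ^ (𝔆-1) := by
            apply pow_le_pow_left₀ (by positivity) hml.le
    have hexp : (2:ℝ) ^ (M * ((r:ℝ) - β j0)) = (2:ℝ) ^ (M * (r:ℝ)) * (2:ℝ) ^ (-(M * β j0)) := by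
      rw [← Real.rpow_add two_pos]
      ring_nf
    calc (B⁻¹) ^ (𝔆-1) * (2:ℝ) ^ (-(M * β j0)) * (2:ℝ) ^ (M * (r:ℝ)) * (r:ℝ) ^ (𝔆-1)
        = ((B⁻¹) ^ (𝔆-1) * (r:ℝ) ^ (𝔆-1)) * ((2:ℝ) ^ (M * (r:ℝ)) * (2:ℝ) ^ (-(M * β j0))) := by
          ring
      _ ≤ ((m:ℝ)+1) ^ (𝔆-1) * ((2:ℝ) ^ (M * (r:ℝ)) * (2:ℝ) ^ (-(M * β j0))) := by
          apply mul_le_mul_of_nonneg_right hmpow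
          positivity
      _ = ((m:ℝ)+1) ^ (𝔆-1) * (2:ℝ) ^ (M * ((r:ℝ) - β j0)) := by rw [hexp]
      _ ≤ ∑ y ∈ T, f (Φ y) := step3
      _ = ∑ κ ∈ T.image Φ, f κ := step2.symm
      _ ≤ ∑' κ, f κ := step1
  · -- UPPER BOUND
    set Y : Finset (Fin d → ℕ) :=
      Fintype.piFinset (fun j => if j = j0 then {0} else Finset.range (n+1)) with hY
    have hYmem : ∀ y ∈ Y, y j0 = 0 ∧ ∀ j, y j ≤ n := by
      intro y hy
      rw [hY, Fintype.mem_piFinset] at hy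
      constructor
      · have := hy j0
        rw [if_pos rfl] at this
        simpa using this
      · intro j
        have := hy j
        split at this
        · simp at this; omega
        · exact Nat.lt_succ_iff.1 (Finset.mem_range.1 this)
    have hmaps : ∀ κ ∈ A, Function.update κ j0 0 ∈ Y := by
      intro κ hκ
      rw [hA, Fintype.mem_piFinset] at hκ
      rw [hY, Fintype.mem_piFinset]
      intro j
      rcases eq_or_ne j j0 with rfl | hjne
      · simp
      · rw [if_neg hjne, Function.update_of_ne hjne]
        exact hκ j
    have hqd : (0:ℝ) < q - 1 := by linarith
    have hfiber : ∀ y ∈ Y, (∑ κ ∈ A.filter (fun κ => Function.update κ j0 0 = y), f κ)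
        ≤ (q / (q-1)) * (2:ℝ) ^ (M * (r:ℝ)) * (2:ℝ) ^ (-(∑ j, (y j:ℝ) * (M * β j - α j))) := by
      intro y hy
      obtain ⟨hy0, hyn⟩ := hYmem y hy
      have himg : A.filter (fun κ => Function.update κ j0 0 = y)
          = (Finset.range (n+1)).image (fun k => Function.update y j0 k) := by
        ext κ
        simp only [Finset.mem_filter, Finset.mem_image, Finset.mem_range]
        constructor
        · rintro ⟨hκA, hκg⟩
          refine ⟨κ j0, ?_, ?_⟩
          · rw [hA, Fintype.mem_piFinset] at hκA
            simpa using hκA j0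
          · funext x
            rcases eq_or_ne x j0 with rfl | hxne
            · rw [Function.update_self]
            · rw [Function.update_of_ne hxne, ← hκg, Function.update_of_ne hxne]
        · rintro ⟨k, hk, rfl⟩
          constructor
          · rw [hA, Fintype.mem_piFinset]
            intro j
            rcases eq_or_ne j j0 with rfl | hjne
            · rw [Function.update_self]
              exact Finset.mem_range.2 hk
            · rw [Function.update_of_ne hjne]
              exact Finset.mem_range.2 (Nat.lt_succ_of_le (hyn j))
          · funext x
            rcases eq_or_ne x j0 with rfl | hxne
            · rw [Function.update_self, hy0]
            · rw [Function.update_of_ne hxne, Function.update_of_ne hxne]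
      rw [himg, Finset.sum_image (by
        intro a _ c _ hac
        have := congrFun hac j0
        simpa using this)]
      have hsum_eq : ∀ k : ℕ, f (Function.update y j0 k)
          = if (∑ j, (y j:ℝ) * β j) + (k:ℝ) * β j0 ≤ (r:ℝ)
            then (2:ℝ) ^ ((∑ j, (y j:ℝ) * α j) + (k:ℝ) * α j0) else 0 := by
        intro k
        simp only [hfdef]
        rw [aux_update_sum y j0 hy0 k β, aux_update_sum y j0 hy0 k α]
      rw [Finset.sum_congr rfl fun k _ => hsum_eq k]
      set Sβ := ∑ j, (y j:ℝ) * β j with hSβ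
      set Sα := ∑ j, (y j:ℝ) * α j with hSα
      have hSβ0 : 0 ≤ Sβ := Finset.sum_nonneg fun j _ => mul_nonneg (Nat.cast_nonneg _) (hβ j).le
      have hSδ : -(∑ j, (y j:ℝ) * (M * β j - α j)) = Sα - M * Sβ := by
        rw [hSα, hSβ, Finset.mul_sum, ← Finset.sum_sub_distrib, ← Finset.sum_neg_distrib]
        apply Finset.sum_congr rfl
        intro j _
        ring
      have hrpos : (0:ℝ) < (2:ℝ) ^ (M * (r:ℝ)) := Real.rpow_pos_of_pos two_pos _
      have hδpos2 : (0:ℝ) < (2:ℝ) ^ (Sα - M * Sβ) := Real.rpow_pos_of_pos two_pos _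
      rw [hSδ]
      by_cases hc : Sβ ≤ (r:ℝ)
      · set K : ℕ := ⌊((r:ℝ) - Sβ)/β j0⌋₊ with hK
        have hterm : ∀ k ∈ Finset.range (n+1),
            (if Sβ + (k:ℝ) * β j0 ≤ (r:ℝ) then (2:ℝ) ^ (Sα + (k:ℝ) * α j0) else 0)
            ≤ (if k ≤ K then (2:ℝ) ^ Sα * q ^ k else 0) := by
          intro k _
          split
          · next h =>
            have hkK : k ≤ K := Nat.le_floor (by
              rw [le_div_iff₀ hβj0]
              linarith)
            rw [if_pos hkK, Real.rpow_add two_pos, hαj0, aux_rpow_nat, hq]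
          · next h =>
            split
            · positivity
            · exact le_refl 0
        have hKle : (K:ℝ) * β j0 ≤ (r:ℝ) - Sβ := by
          have h6 := Nat.floor_le (div_nonneg (by linarith : (0:ℝ) ≤ (r:ℝ) - Sβ) hβj0.le)
          calc (K:ℝ) * β j0 ≤ (((r:ℝ) - Sβ)/β j0) * β j0 :=
                mul_le_mul_of_nonneg_right h6 hβj0.le
            _ = (r:ℝ) - Sβ := by field_simp
        have hqK : q ^ (K+1) ≤ (2:ℝ) ^ (M * ((r:ℝ) - Sβ)) * q := by
          have e1 : q ^ (K+1) = (2:ℝ) ^ (((K+1 : ℕ):ℝ) * (M * β j0)) := by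
            rw [aux_rpow_nat, hq]
          rw [e1, hq, ← Real.rpow_add two_pos]
          apply Real.rpow_le_rpow_of_exponent_le one_le_two
          push_cast
          nlinarith [mul_le_mul_of_nonneg_left hKle hMpos.le]
        calc ∑ k ∈ Finset.range (n+1),
              (if Sβ + (k:ℝ) * β j0 ≤ (r:ℝ) then (2:ℝ) ^ (Sα + (k:ℝ) * α j0) else 0)
            ≤ ∑ k ∈ Finset.range (n+1), (if k ≤ K then (2:ℝ) ^ Sα * q ^ k else 0) :=
              Finset.sum_le_sum hterm
          _ = ∑ k ∈ (Finset.range (n+1)).filter (fun k => k ≤ K), (2:ℝ) ^ Sα * q ^ k :=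
              (Finset.sum_filter _ _).symm
          _ ≤ ∑ k ∈ Finset.range (K+1), (2:ℝ) ^ Sα * q ^ k := by
              apply Finset.sum_le_sum_of_subset_of_nonneg
              · intro k hk
                simp only [Finset.mem_filter, Finset.mem_range] at hk ⊢
                omega
              · intro k _ _
                positivity
          _ = (2:ℝ) ^ Sα * ∑ k ∈ Finset.range (K+1), q ^ k := by rw [Finset.mul_sum]
          _ ≤ (2:ℝ) ^ Sα * (q ^ (K+1) / (q-1)) :=
              mul_le_mul_of_nonneg_left (aux_geom_top q hq1 (K+1)) (by positivity)
          _ ≤ (2:ℝ) ^ Sα * (((2:ℝ) ^ (M * ((r:ℝ) - Sβ)) * q) / (q-1)) := by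
              apply mul_le_mul_of_nonneg_left _ (by positivity)
              exact div_le_div_of_nonneg_right hqK hqd.le
          _ = (q / (q-1)) * (2:ℝ) ^ (M * (r:ℝ)) * (2:ℝ) ^ (Sα - M * Sβ) := by
              have e2 : (2:ℝ) ^ (M * ((r:ℝ) - Sβ)) = (2:ℝ) ^ (M * (r:ℝ)) * (2:ℝ) ^ (-(M * Sβ)) := by
                rw [← Real.rpow_add two_pos]; ring_nf
              have e3 : (2:ℝ) ^ (Sα - M * Sβ) = (2:ℝ) ^ Sα * (2:ℝ) ^ (-(M * Sβ)) := by
                rw [← Real.rpow_add two_pos]; ring_nf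
              rw [e2, e3]
              field_simp
      · have hall : ∀ k ∈ Finset.range (n+1),
            (if Sβ + (k:ℝ) * β j0 ≤ (r:ℝ) then (2:ℝ) ^ (Sα + (k:ℝ) * α j0) else 0) = 0 := by
          intro k _
          push_neg at hc
          have hkk : (0:ℝ) ≤ (k:ℝ) * β j0 := mul_nonneg (Nat.cast_nonneg _) hβj0.le
          rw [if_neg (by push_neg; linarith)]
        rw [Finset.sum_eq_zero hall]
        have h10 : (0:ℝ) < q / (q - 1) := div_pos (lt_trans one_pos hq1) hqd
        exact mul_nonneg (mul_nonneg h10.le hrpos.le) hδpos2.le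
    have hsumY : ∑ y ∈ Y, (2:ℝ) ^ (-(∑ j, (y j:ℝ) * (M * β j - α j)))
        ≤ ((n:ℝ)+1) ^ (𝔆-1) * C4 := by
      have hprod : ∀ y : Fin d → ℕ, (2:ℝ) ^ (-(∑ j, (y j:ℝ) * (M * β j - α j)))
          = ∏ j, (2:ℝ) ^ (-((y j:ℝ) * (M * β j - α j))) := by
        intro y
        rw [← Finset.sum_neg_distrib]
        exact Real.rpow_sum_of_pos two_pos _ _
      rw [Finset.sum_congr rfl fun y _ => hprod y, hY,
        ← Finset.prod_univ_sum (fun j => if j = j0 then ({0} : Finset ℕ) else Finset.range (n+1))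
          (fun j t => (2:ℝ) ^ (-((t:ℝ) * (M * β j - α j))))]
      have hfac : ∀ j : Fin d,
          (∑ t ∈ (if j = j0 then ({0} : Finset ℕ) else Finset.range (n+1)),
            (2:ℝ) ^ (-((t:ℝ) * (M * β j - α j))))
          ≤ (if j ∈ E.erase j0 then ((n:ℝ)+1) else 1)
            * (if α j / β j = M then 1 else (1 - (2:ℝ) ^ (-(M * β j - α j)))⁻¹) := by
        intro j
        rcases eq_or_ne j j0 with rfl | hjne
        · rw [if_pos rfl, if_neg (Finset.notMem_erase _ E), if_pos (show α j / β j = M from hj0)]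
          simp
        · rw [if_neg hjne]
          by_cases hjE : j ∈ E
          · have hα : α j / β j = M := by
              have h11 := hjE
              rw [hE, Finset.mem_filter] at h11
              exact h11.2
            rw [if_pos (Finset.mem_erase.2 ⟨hjne, hjE⟩), if_pos hα, mul_one]
            have hone : ∀ t ∈ Finset.range (n+1), (2:ℝ) ^ (-((t:ℝ) * (M * β j - α j))) = 1 := by
              intro t _
              have : M * β j - α j = 0 := by rw [hαE j hα]; ring
              rw [this]
              simp
            rw [Finset.sum_congr rfl hone, Finset.sum_const, Finset.card_range]
            push_cast
            simp
          · have hα : ¬ (α j / β j = M) := by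
              intro h
              exact hjE (by simp [hE, h])
            rw [if_neg (fun h => hjE (Finset.mem_of_mem_erase h)), if_neg hα, one_mul]
            have hx0 : (0:ℝ) < (2:ℝ) ^ (-(M * β j - α j)) := Real.rpow_pos_of_pos two_pos _
            have hx1 : (2:ℝ) ^ (-(M * β j - α j)) < 1 := hxlt1 j hjE
            have hpow : ∀ t : ℕ, (2:ℝ) ^ (-((t:ℝ) * (M * β j - α j)))
                = ((2:ℝ) ^ (-(M * β j - α j))) ^ t := by
              intro t
              rw [← aux_rpow_nat]
              ring_nf
            rw [Finset.sum_congr rfl fun t _ => hpow t]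
            exact aux_geom_le _ hx0.le hx1 (n+1)
      calc ∏ j, (∑ t ∈ (if j = j0 then ({0} : Finset ℕ) else Finset.range (n+1)),
              (2:ℝ) ^ (-((t:ℝ) * (M * β j - α j))))
          ≤ ∏ j, ((if j ∈ E.erase j0 then ((n:ℝ)+1) else 1)
            * (if α j / β j = M then 1 else (1 - (2:ℝ) ^ (-(M * β j - α j)))⁻¹)) := by
            apply Finset.prod_le_prod
            · intro j _
              apply Finset.sum_nonneg
              intro t _
              positivity
            · intro j _
              exact hfac j
        _ = ((n:ℝ)+1) ^ (𝔆-1) * C4 := by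
            rw [Finset.prod_mul_distrib, Finset.prod_ite_mem, Finset.univ_inter,
              Finset.prod_const, ← h𝔖, hC4]
    have hn1 : (n:ℝ) + 1 ≤ (1/b + 2) * (r:ℝ) := by
      have h7 : (n:ℝ) < (r:ℝ)/b + 1 := by
        rw [hn]
        exact Nat.ceil_lt_add_one (div_nonneg (Nat.cast_nonneg _) hb.le)
      have h8 : (r:ℝ)/b + 2 ≤ (1/b + 2) * (r:ℝ) := by
        have : (r:ℝ)/b = (1/b) * (r:ℝ) := by ring
        nlinarith [mul_le_mul_of_nonneg_left hrR (by positivity : (0:ℝ) ≤ 1/b)]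
      linarith
    have hq0 : (0:ℝ) < q / (q-1) := div_pos (by linarith) hqd
    have hrp : (0:ℝ) < (2:ℝ) ^ (M * (r:ℝ)) := Real.rpow_pos_of_pos two_pos _
    calc (∑' κ, f κ) = ∑ κ ∈ A, f κ := htsum
      _ = ∑ y ∈ Y, ∑ κ ∈ A.filter (fun κ => Function.update κ j0 0 = y), f κ :=
          (Finset.sum_fiberwise_of_maps_to hmaps f).symm
      _ ≤ ∑ y ∈ Y, (q / (q-1)) * (2:ℝ) ^ (M * (r:ℝ))
            * (2:ℝ) ^ (-(∑ j, (y j:ℝ) * (M * β j - α j))) :=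
          Finset.sum_le_sum hfiber
      _ = (q / (q-1)) * (2:ℝ) ^ (M * (r:ℝ))
            * ∑ y ∈ Y, (2:ℝ) ^ (-(∑ j, (y j:ℝ) * (M * β j - α j))) := by
          rw [← Finset.mul_sum]
      _ ≤ (q / (q-1)) * (2:ℝ) ^ (M * (r:ℝ)) * (((n:ℝ)+1) ^ (𝔆-1) * C4) := by
          apply mul_le_mul_of_nonneg_left hsumY (by positivity)
      _ ≤ (q / (q-1)) * (2:ℝ) ^ (M * (r:ℝ)) * ((((1/b + 2) * (r:ℝ)) ^ (𝔆-1)) * C4) := by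
          apply mul_le_mul_of_nonneg_left _ (by positivity)
          apply mul_le_mul_of_nonneg_right _ hC4pos.le
          exact pow_le_pow_left₀ (by positivity) hn1 _
      _ = (q / (q-1)) * ((1/b + 2) ^ (𝔆-1) * C4) * (2:ℝ) ^ (M * (r:ℝ)) * (r:ℝ) ^ (𝔆-1) := by
          rw [mul_pow]
          ring
end

section
/- Let d ∈ ℕ and α, β ∈ ℝ_+^d, and set β^{-1}α = (α_1/β_1, …, α_d/β_d). Then there exist constants c₃, c₄ > 0 depending only on d, α, β such that for every r ∈ ℕ: c₃ · 2^{−𝔪(β^{-1}α) r} · r^{𝔠(β^{-1}α) − 1} ≤ Σ_{κ ∈ ℤ_+^d, (κ,β) > r} 2^{−(κ,α)} ≤ c₄ · 2^{−𝔪(β^{-1}α) r} · r^{𝔠(β^{-1}α) − 1}. -/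
open scoped ENNReal NNReal BigOperators
open Finset

namespace Stmt2Aux

lemma two_rpow_ne_top (x : ℝ) : (2:ℝ≥0∞) ^ x ≠ ⊤ := by
  rw [Ne, ENNReal.rpow_eq_top_iff]
  push_neg
  refine ⟨fun h => absurd h (by norm_num), fun h => absurd h (by norm_num)⟩

lemma two_rpow_add (x y : ℝ) : (2:ℝ≥0∞) ^ (x + y) = 2 ^ x * 2 ^ y :=
  ENNReal.rpow_add x y (by norm_num) (by norm_num)

lemma two_rpow_mono {x y : ℝ} (h : x ≤ y) : (2:ℝ≥0∞) ^ x ≤ 2 ^ y :=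
  ENNReal.rpow_le_rpow_of_exponent_le (by norm_num) h

lemma two_rpow_le_one {x : ℝ} (h : x ≤ 0) : (2:ℝ≥0∞) ^ x ≤ 1 := by
  simpa using two_rpow_mono h

lemma geo_eq {a : ℝ} (k : ℕ) : (2:ℝ≥0∞) ^ (-((k:ℝ) * a)) = ((2:ℝ≥0∞) ^ (-a)) ^ k := by
  rw [← ENNReal.rpow_natCast ((2:ℝ≥0∞) ^ (-a)) k, ← ENNReal.rpow_mul]
  ring_nf

lemma geo_ne_top {a : ℝ} (ha : 0 < a) : (∑' k : ℕ, (2:ℝ≥0∞) ^ (-((k:ℝ) * a))) ≠ ⊤ := by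
  simp_rw [geo_eq]
  rw [ENNReal.tsum_geometric, Ne, ENNReal.inv_eq_top]
  have h1 : (2:ℝ≥0∞) ^ (-a) < 1 :=
    ENNReal.rpow_lt_one_of_one_lt_of_neg (by norm_num) (neg_neg_of_pos ha)
  exact (tsub_pos_of_lt h1).ne'

end Stmt2Aux
namespace Stmt2Aux

lemma fin_sum_ne_top : ∀ (c : ℕ) (a : Fin c → ℝ), (∀ j, 0 < a j) →
    (∑' κ : Fin c → ℕ, (2:ℝ≥0∞) ^ (-(∑ j, (κ j : ℝ) * a j))) ≠ ⊤ := by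
  intro c
  induction c with
  | zero =>
    intro a ha
    haveI : Unique (Fin 0 → ℕ) := ⟨⟨fun i => i.elim0⟩, fun f => funext fun i => i.elim0⟩
    rw [tsum_eq_single default (fun b hb => absurd (Subsingleton.elim b default) hb)]
    simp
  | succ c ih =>
    intro a ha
    have key : ∑' κ : Fin (c+1) → ℕ, (2:ℝ≥0∞) ^ (-(∑ j, (κ j : ℝ) * a j))
        = ∑' p : ℕ × (Fin c → ℕ),
            (2:ℝ≥0∞) ^ (-(((p.1:ℝ) * a 0) + ∑ j : Fin c, (p.2 j : ℝ) * a j.succ)) := by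
      rw [← Equiv.tsum_eq (Fin.consEquiv (fun _ : Fin (c+1) => ℕ))]
      refine tsum_congr fun p => ?_
      congr 2
      rw [Fin.sum_univ_succ]
      simp [Fin.consEquiv]
    rw [key, ENNReal.tsum_prod']
    have : ∀ k : ℕ, ∑' κ : Fin c → ℕ,
        (2:ℝ≥0∞) ^ (-(((k:ℝ) * a 0) + ∑ j : Fin c, (κ j : ℝ) * a j.succ))
        = (2:ℝ≥0∞) ^ (-((k:ℝ) * a 0)) *
          ∑' κ : Fin c → ℕ, (2:ℝ≥0∞) ^ (-(∑ j : Fin c, (κ j : ℝ) * a j.succ)) := by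
      intro k
      rw [← ENNReal.tsum_mul_left]
      refine tsum_congr fun κ => ?_
      rw [neg_add, two_rpow_add]
    simp_rw [this]
    rw [ENNReal.tsum_mul_right]
    exact ENNReal.mul_ne_top (geo_ne_top (ha 0)) (ih _ fun j => ha j.succ)

lemma tsum_nat_split (f : ℕ → ℝ≥0∞) (n : ℕ) :
    ∑' k, f k ≤ (∑ i ∈ Finset.range n, f i) + ∑' k, f (k + n) := by
  have h1 : ∑' k, f k
      = (∑' k, if k < n then f k else 0) + ∑' k, (if k < n then (0:ℝ≥0∞) else f k) := by
    rw [← ENNReal.tsum_add]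
    exact tsum_congr fun k => by split <;> simp
  have h2 : (∑' k, if k < n then f k else 0) = ∑ i ∈ Finset.range n, f i := by
    rw [tsum_eq_sum (s := Finset.range n) (fun b hb => if_neg (by simpa using hb))]
    exact Finset.sum_congr rfl fun i hi => if_pos (by simpa using hi)
  have h3 : (∑' k, if k < n then (0:ℝ≥0∞) else f k) = ∑' k, f (k + n) := by
    have hsupp : Function.support (fun k => if k < n then (0:ℝ≥0∞) else f k)
        ⊆ Set.range (· + n) := by
      intro x hx
      have hxn : ¬ x < n := fun h => by simp [h] at hx
      exact ⟨x - n, show x - n + n = x by omega⟩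
    rw [← (add_left_injective n).tsum_eq hsupp]
    exact tsum_congr fun k => if_neg (by omega)
  rw [h1, h2, h3]

lemma tail_bound {b0 m : ℝ} (hb0 : 0 < b0) (hm : 0 < m) :
    ∃ C : ℝ≥0∞, C ≠ ⊤ ∧ ∀ u : ℝ, 0 ≤ u →
      ∑' k : ℕ, (2:ℝ≥0∞) ^ (-(m * max ((k:ℝ) * b0 - u) 0)) ≤ C * ENNReal.ofReal (max u 1) := by
  refine ⟨ENNReal.ofReal (1/b0 + 2) + ∑' k : ℕ, (2:ℝ≥0∞) ^ (-((k:ℝ) * (m*b0))),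
    ENNReal.add_ne_top.2 ⟨ENNReal.ofReal_ne_top, geo_ne_top (mul_pos hm hb0)⟩, fun u hu => ?_⟩
  set K : ℕ := ⌈u / b0⌉₊ with hK
  have hKb : u ≤ ((K:ℝ) + 1) * b0 := by
    have h1 := Nat.le_ceil (u / b0)
    have h2 : u / b0 * b0 = u := by field_simp
    nlinarith
  refine le_trans (tsum_nat_split _ (K+1)) ?_
  have hfirst : (∑ i ∈ Finset.range (K+1), (2:ℝ≥0∞) ^ (-(m * max ((i:ℝ) * b0 - u) 0)))
      ≤ (K+1 : ℕ) := by
    calc (∑ i ∈ Finset.range (K+1), (2:ℝ≥0∞) ^ (-(m * max ((i:ℝ) * b0 - u) 0)))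
        ≤ ∑ _i ∈ Finset.range (K+1), 1 := by
          refine Finset.sum_le_sum fun i _ => two_rpow_le_one ?_
          have : 0 ≤ m * max ((i:ℝ) * b0 - u) 0 :=
            mul_nonneg hm.le (le_max_right _ _)
          linarith
      _ = (K+1 : ℕ) := by simp
  have hsecond : (∑' k : ℕ, (2:ℝ≥0∞) ^ (-(m * max (((k + (K+1) : ℕ):ℝ) * b0 - u) 0)))
      ≤ ∑' k : ℕ, (2:ℝ≥0∞) ^ (-((k:ℝ) * (m*b0))) := by
    refine ENNReal.tsum_le_tsum fun k => two_rpow_mono ?_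
    have h3 : (k:ℝ) * b0 ≤ ((k + (K+1) : ℕ):ℝ) * b0 - u := by
      push_cast
      nlinarith [hKb]
    have h4 : (k:ℝ) * b0 ≤ max (((k + (K+1) : ℕ):ℝ) * b0 - u) 0 := le_max_of_le_left h3
    have : (k:ℝ) * (m * b0) ≤ m * max (((k + (K+1) : ℕ):ℝ) * b0 - u) 0 := by
      calc (k:ℝ) * (m*b0) = m * ((k:ℝ)*b0) := by ring
        _ ≤ _ := mul_le_mul_of_nonneg_left h4 hm.le
    linarith
  have hone : (1:ℝ≥0∞) ≤ ENNReal.ofReal (max u 1) :=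
    ENNReal.one_le_ofReal.2 (le_max_right _ _)
  calc _ ≤ ((K+1:ℕ) : ℝ≥0∞) + ∑' k : ℕ, (2:ℝ≥0∞) ^ (-((k:ℝ) * (m*b0))) :=
        add_le_add hfirst hsecond
    _ ≤ ENNReal.ofReal (1/b0 + 2) * ENNReal.ofReal (max u 1)
        + (∑' k : ℕ, (2:ℝ≥0∞) ^ (-((k:ℝ) * (m*b0)))) * ENNReal.ofReal (max u 1) := by
        refine add_le_add ?_ (le_mul_of_one_le_right (zero_le) hone)
        rw [← ENNReal.ofReal_natCast (K+1), ← ENNReal.ofReal_mul (by positivity)]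
        refine ENNReal.ofReal_le_ofReal ?_
        have h5 : (K:ℝ) < u / b0 + 1 := Nat.ceil_lt_add_one (by positivity)
        have h6 : u ≤ max u 1 := le_max_left _ _
        have h7 : (1:ℝ) ≤ max u 1 := le_max_right _ _
        have h8 : u / b0 ≤ (1/b0) * max u 1 := by
          rw [div_le_iff₀ hb0]
          calc u ≤ max u 1 := h6
            _ = 1/b0 * max u 1 * b0 := by field_simp
        push_cast
        nlinarith
    _ = _ := by rw [add_mul]

end Stmt2Aux
namespace Stmt2Aux

lemma base1 {b0 m : ℝ} (hb0 : 0 < b0) (hm : 0 < m) :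
    ∃ C : ℝ≥0∞, C ≠ ⊤ ∧ ∀ s : ℝ,
      (∑' k : ℕ, if s < (k:ℝ) * b0 then (2:ℝ≥0∞) ^ (-(m * ((k:ℝ) * b0))) else 0)
        ≤ C * (2:ℝ≥0∞) ^ (-(m * max s 0)) := by
  refine ⟨(2:ℝ≥0∞) ^ (m*b0) * ∑' k : ℕ, (2:ℝ≥0∞) ^ (-((k:ℝ) * (m*b0))),
    ENNReal.mul_ne_top (two_rpow_ne_top _) (geo_ne_top (mul_pos hm hb0)), fun s => ?_⟩
  set u : ℝ := max s 0 with hu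
  have hu0 : 0 ≤ u := le_max_right _ _
  set k₀ : ℕ := ⌊u / b0⌋₊ with hk₀
  have hk₀b : u ≤ ((k₀:ℝ) + 1) * b0 := by
    have h1 : u / b0 < (k₀:ℝ) + 1 := Nat.lt_floor_add_one _
    have h2 : u / b0 * b0 = u := by field_simp
    nlinarith
  refine le_trans (tsum_nat_split _ k₀) ?_
  have hfirst : (∑ i ∈ Finset.range k₀,
      if s < (i:ℝ) * b0 then (2:ℝ≥0∞) ^ (-(m * ((i:ℝ) * b0))) else 0) = 0 := by
    refine Finset.sum_eq_zero fun i hi => ?_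
    rw [if_neg]
    push_neg
    have h1 : ((i:ℝ) + 1) ≤ (k₀ : ℝ) := by
      have := Finset.mem_range.1 hi
      exact_mod_cast this
    have h2 : (k₀ : ℝ) ≤ u / b0 := Nat.floor_le (by positivity)
    have h3 : (i:ℝ) * b0 < u := by
      have : ((i:ℝ)+1) * b0 ≤ u := by
        calc ((i:ℝ)+1) * b0 ≤ (u/b0) * b0 := by nlinarith
          _ = u := by field_simp
      nlinarith
    have h4 : 0 < u := lt_of_le_of_lt (by positivity) h3
    have h5 : u = s := by
      rcases le_or_gt s 0 with h | h
      · rw [hu, max_eq_right h] at h4; linarith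
      · rw [hu, max_eq_left h.le]
    linarith [h3, h5.symm.le]
  have hsecond : (∑' k : ℕ,
      if s < ((k + k₀ : ℕ):ℝ) * b0 then (2:ℝ≥0∞) ^ (-(m * (((k + k₀:ℕ):ℝ) * b0))) else 0)
      ≤ ∑' k : ℕ, (2:ℝ≥0∞) ^ (m*b0) * ((2:ℝ≥0∞) ^ (-(m*u)) * (2:ℝ≥0∞) ^ (-((k:ℝ) * (m*b0)))) := by
    refine ENNReal.tsum_le_tsum fun k => ?_
    rw [← two_rpow_add, ← two_rpow_add]
    split
    · refine two_rpow_mono ?_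
      push_cast
      nlinarith [hk₀b]
    · exact zero_le
  rw [hfirst, zero_add]
  refine le_trans hsecond ?_
  rw [ENNReal.tsum_mul_left, ENNReal.tsum_mul_left, hu]
  exact le_of_eq (by ring)

end Stmt2Aux
namespace Stmt2Aux

lemma plus_split {x s : ℝ} (hx : 0 ≤ x) :
    x + max (s - x) 0 = max s 0 + max (x - max s 0) 0 := by
  rcases le_total s x with h | h
  · rw [max_eq_right (by linarith : s - x ≤ 0)]
    rcases le_total s 0 with h0 | h0
    · rw [max_eq_right h0, max_eq_left (by linarith)]; ring
    · rw [max_eq_left h0, max_eq_left (by linarith)]; ring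
  · rw [max_eq_left (by linarith : 0 ≤ s - x)]
    have h0 : 0 ≤ s := le_trans hx h
    rw [max_eq_left h0, max_eq_right (by linarith)]; ring

lemma auxA : ∀ (c : ℕ) (b : Fin c → ℝ), (∀ j, 0 < b j) → ∀ m : ℝ, 0 < m →
    ∃ C : ℝ≥0∞, C ≠ ⊤ ∧ ∀ s : ℝ,
      (∑' κ : Fin c → ℕ, if s < ∑ j, (κ j : ℝ) * b j then
          (2:ℝ≥0∞) ^ (-(m * ∑ j, (κ j : ℝ) * b j)) else 0)
        ≤ C * (2:ℝ≥0∞) ^ (-(m * max s 0)) * ENNReal.ofReal (max s 1) ^ (c - 1) := by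
  intro c
  induction c with
  | zero =>
    intro b hb m hm
    refine ⟨1, ENNReal.one_ne_top, fun s => ?_⟩
    haveI : Unique (Fin 0 → ℕ) := ⟨⟨fun i => i.elim0⟩, fun f => funext fun i => i.elim0⟩
    rw [tsum_eq_single default (fun b hb => absurd (Subsingleton.elim b default) hb)]
    simp only [Finset.univ_eq_empty, Finset.sum_empty]
    split
    · rename_i h
      rw [max_eq_right (le_of_lt h)]
      simp
    · exact zero_le
  | succ c ih =>
    intro b hb m hm
    match c, ih with
    | 0, _ =>
      obtain ⟨C, hC, h⟩ := base1 (hb 0) hm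
      refine ⟨C, hC, fun s => ?_⟩
      have key : (∑' κ : Fin 1 → ℕ, if s < ∑ j, (κ j : ℝ) * b j then
            (2:ℝ≥0∞) ^ (-(m * ∑ j, (κ j : ℝ) * b j)) else 0)
          = ∑' k : ℕ, if s < (k:ℝ) * b 0 then (2:ℝ≥0∞) ^ (-(m * ((k:ℝ) * b 0))) else 0 := by
        rw [← Equiv.tsum_eq (Equiv.funUnique (Fin 1) ℕ).symm]
        exact tsum_congr fun k => by simp [Fin.sum_univ_one]
      rw [key]
      simpa using h s
    | (c+1), ih =>
      obtain ⟨C₁, hC₁, h₁⟩ := ih (fun j => b j.succ) (fun j => hb j.succ) m hm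
      obtain ⟨C₂, hC₂, h₂⟩ := tail_bound (hb 0) hm
      refine ⟨C₁ * C₂, ENNReal.mul_ne_top hC₁ hC₂, fun s => ?_⟩
      have hb0 : (0:ℝ) < b 0 := hb 0
      have hsum : ∀ p : ℕ × (Fin (c+1) → ℕ),
          (∑ j : Fin (c+2), (((Fin.consEquiv (fun _ : Fin (c+2) => ℕ)) p) j : ℝ) * b j)
          = (p.1:ℝ) * b 0 + ∑ j : Fin (c+1), (p.2 j : ℝ) * b j.succ := by
        intro p
        rw [Fin.sum_univ_succ]
        simp [Fin.consEquiv]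
      have key : (∑' κ : Fin (c+2) → ℕ, if s < ∑ j, (κ j : ℝ) * b j then
            (2:ℝ≥0∞) ^ (-(m * ∑ j, (κ j : ℝ) * b j)) else 0)
          = ∑' k : ℕ, (2:ℝ≥0∞) ^ (-(m * ((k:ℝ) * b 0))) *
              ∑' κ : Fin (c+1) → ℕ,
                (if s - (k:ℝ) * b 0 < ∑ j, (κ j : ℝ) * b j.succ then
                  (2:ℝ≥0∞) ^ (-(m * ∑ j, (κ j : ℝ) * b j.succ)) else 0) := by
        rw [← Equiv.tsum_eq (Fin.consEquiv (fun _ : Fin (c+2) => ℕ)), ENNReal.tsum_prod']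
        refine tsum_congr fun k => ?_
        rw [← ENNReal.tsum_mul_left]
        refine tsum_congr fun κ => ?_
        have hs := hsum (k, κ)
        simp only at hs
        rw [hs, mul_ite, mul_zero]
        refine if_congr ?_ ?_ rfl
        · constructor <;> intro <;> linarith
        · rw [← two_rpow_add]
          congr 1
          ring
      rw [key]
      have bound : ∀ k : ℕ, (2:ℝ≥0∞) ^ (-(m * ((k:ℝ) * b 0))) *
              (∑' κ : Fin (c+1) → ℕ,
                (if s - (k:ℝ) * b 0 < ∑ j, (κ j : ℝ) * b j.succ then
                  (2:ℝ≥0∞) ^ (-(m * ∑ j, (κ j : ℝ) * b j.succ)) else 0))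
          ≤ (C₁ * (2:ℝ≥0∞) ^ (-(m * max s 0)) * ENNReal.ofReal (max s 1) ^ c) *
              (2:ℝ≥0∞) ^ (-(m * max ((k:ℝ) * b 0 - max s 0) 0)) := by
        intro k
        have e1 : (2:ℝ≥0∞) ^ (-(m * ((k:ℝ) * b 0))) * (2:ℝ≥0∞) ^ (-(m * max (s - (k:ℝ) * b 0) 0))
            = (2:ℝ≥0∞) ^ (-(m * max s 0)) * (2:ℝ≥0∞) ^ (-(m * max ((k:ℝ) * b 0 - max s 0) 0)) := by
          rw [← two_rpow_add, ← two_rpow_add]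
          congr 1
          have h := plus_split (x := (k:ℝ) * b 0) (s := s) (by positivity)
          linear_combination (-m) * h
        have e2 : ENNReal.ofReal (max (s - (k:ℝ) * b 0) 1) ^ ((c+1) - 1)
            ≤ ENNReal.ofReal (max s 1) ^ c := by
          simp only [Nat.add_sub_cancel]
          refine pow_le_pow_left' (ENNReal.ofReal_le_ofReal ?_) c
          have hkb : (0:ℝ) ≤ (k:ℝ) * b 0 := by positivity
          exact max_le_max (by linarith) le_rfl
        calc _ ≤ (2:ℝ≥0∞) ^ (-(m * ((k:ℝ) * b 0))) *
              (C₁ * (2:ℝ≥0∞) ^ (-(m * max (s - (k:ℝ) * b 0) 0)) *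
                ENNReal.ofReal (max (s - (k:ℝ) * b 0) 1) ^ ((c+1) - 1)) :=
            mul_le_mul_right (h₁ (s - (k:ℝ) * b 0)) _
          _ ≤ (2:ℝ≥0∞) ^ (-(m * ((k:ℝ) * b 0))) *
              (C₁ * (2:ℝ≥0∞) ^ (-(m * max (s - (k:ℝ) * b 0) 0)) *
                ENNReal.ofReal (max s 1) ^ c) := by
            exact mul_le_mul_right (mul_le_mul_right e2 _) _
          _ = (C₁ * ENNReal.ofReal (max s 1) ^ c) *
              ((2:ℝ≥0∞) ^ (-(m * ((k:ℝ) * b 0))) * (2:ℝ≥0∞) ^ (-(m * max (s - (k:ℝ) * b 0) 0))) := by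
            ring
          _ = _ := by rw [e1]; ring
      calc _ ≤ ∑' k : ℕ, (C₁ * (2:ℝ≥0∞) ^ (-(m * max s 0)) * ENNReal.ofReal (max s 1) ^ c) *
              (2:ℝ≥0∞) ^ (-(m * max ((k:ℝ) * b 0 - max s 0) 0)) :=
          ENNReal.tsum_le_tsum bound
        _ = (C₁ * (2:ℝ≥0∞) ^ (-(m * max s 0)) * ENNReal.ofReal (max s 1) ^ c) *
            ∑' k : ℕ, (2:ℝ≥0∞) ^ (-(m * max ((k:ℝ) * b 0 - max s 0) 0)) :=
          ENNReal.tsum_mul_left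
        _ ≤ (C₁ * (2:ℝ≥0∞) ^ (-(m * max s 0)) * ENNReal.ofReal (max s 1) ^ c) *
            (C₂ * ENNReal.ofReal (max (max s 0) 1)) :=
          mul_le_mul_right (h₂ (max s 0) (le_max_right _ _)) _
        _ = _ := by
          have : max (max s 0) 1 = max s 1 := by
            rw [max_assoc]
            norm_num
          rw [this, show c+1+1-1 = c+1 from rfl, pow_succ]
          ring

end Stmt2Aux
namespace Stmt2Aux

lemma sum_transfer {ι : Type} [Fintype ι] (g : ι → ℝ)
    (κ : Fin (Fintype.card ι) → ℕ) :
    (∑ j : ι, (((Equiv.arrowCongr (Fintype.equivFin ι) (Equiv.refl ℕ)).symm κ) j : ℝ) * g j)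
      = ∑ i, (κ i : ℝ) * g ((Fintype.equivFin ι).symm i) := by
  rw [← Equiv.sum_comp (Fintype.equivFin ι).symm
    (fun j => (((Equiv.arrowCongr (Fintype.equivFin ι) (Equiv.refl ℕ)).symm κ) j : ℝ) * g j)]
  refine Finset.sum_congr rfl fun i _ => ?_
  simp [Equiv.arrowCongr]

lemma auxA' (ι : Type) [Fintype ι] (b : ι → ℝ) (hb : ∀ j, 0 < b j) (m : ℝ) (hm : 0 < m) :
    ∃ C : ℝ≥0∞, C ≠ ⊤ ∧ ∀ s : ℝ,
      (∑' κ : ι → ℕ, if s < ∑ j, (κ j : ℝ) * b j then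
          (2:ℝ≥0∞) ^ (-(m * ∑ j, (κ j : ℝ) * b j)) else 0)
        ≤ C * (2:ℝ≥0∞) ^ (-(m * max s 0)) * ENNReal.ofReal (max s 1) ^ (Fintype.card ι - 1) := by
  obtain ⟨C, hC, h⟩ := auxA (Fintype.card ι) (fun i => b ((Fintype.equivFin ι).symm i))
    (fun i => hb _) m hm
  refine ⟨C, hC, fun s => ?_⟩
  have key : (∑' κ : ι → ℕ, if s < ∑ j, (κ j : ℝ) * b j then
          (2:ℝ≥0∞) ^ (-(m * ∑ j, (κ j : ℝ) * b j)) else 0)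
      = ∑' κ : Fin (Fintype.card ι) → ℕ,
          (if s < ∑ i, (κ i : ℝ) * b ((Fintype.equivFin ι).symm i) then
            (2:ℝ≥0∞) ^ (-(m * ∑ i, (κ i : ℝ) * b ((Fintype.equivFin ι).symm i))) else 0) := by
    rw [← Equiv.tsum_eq (Equiv.arrowCongr (Fintype.equivFin ι) (Equiv.refl ℕ)).symm]
    exact tsum_congr fun κ => by rw [sum_transfer b κ]
  rw [key]
  exact h s

lemma fin_sum_ne_top' (ι : Type) [Fintype ι] (a : ι → ℝ) (ha : ∀ j, 0 < a j) :
    (∑' κ : ι → ℕ, (2:ℝ≥0∞) ^ (-(∑ j, (κ j : ℝ) * a j))) ≠ ⊤ := by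
  have key : (∑' κ : ι → ℕ, (2:ℝ≥0∞) ^ (-(∑ j, (κ j : ℝ) * a j)))
      = ∑' κ : Fin (Fintype.card ι) → ℕ,
          (2:ℝ≥0∞) ^ (-(∑ i, (κ i : ℝ) * a ((Fintype.equivFin ι).symm i))) := by
    rw [← Equiv.tsum_eq (Equiv.arrowCongr (Fintype.equivFin ι) (Equiv.refl ℕ)).symm]
    exact tsum_congr fun κ => by rw [sum_transfer a κ]
  rw [key]
  exact fin_sum_ne_top _ _ (fun i => ha _)

end Stmt2Aux
/-- Lemma 1.2.3.  Let `α, β ∈ ℝ_+^d`, `m = 𝔪(β⁻¹α) = min_j α_j/β_j` and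
`𝔠 = card {j : α_j/β_j = m}`.  Then there are `c₃, c₄ > 0` (depending on `d, α, β`) with
`c₃ 2^{−m r} r^{𝔠−1} ≤ Σ_{κ ∈ ℤ_+^d, (κ,β) > r} 2^{−(κ,α)} ≤ c₄ 2^{−m r} r^{𝔠−1}`
for all `r ∈ ℕ`, `r ≥ 1`. -/
theorem stmt_2 (d : ℕ) (hd : 0 < d) (α β : Fin d → ℝ)
    (hα : ∀ j, 0 < α j) (hβ : ∀ j, 0 < β j)
    (m : ℝ) (hm : IsLeast (Set.range fun j => α j / β j) m)
    (𝔠 : ℕ) (h𝔠 : 𝔠 = (Finset.univ.filter fun j => α j / β j = m).card) :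
    ∃ c₃ c₄ : ℝ, 0 < c₃ ∧ 0 < c₄ ∧ ∀ r : ℕ, 0 < r →
      c₃ * (2 : ℝ) ^ (-(m * r)) * (r : ℝ) ^ (𝔠 - 1) ≤
        (∑' κ : Fin d → ℕ,
          if (r : ℝ) < (∑ j, (κ j : ℝ) * β j) then (2 : ℝ) ^ (-(∑ j, (κ j : ℝ) * α j)) else 0) ∧
      (∑' κ : Fin d → ℕ,
          if (r : ℝ) < (∑ j, (κ j : ℝ) * β j) then (2 : ℝ) ^ (-(∑ j, (κ j : ℝ) * α j)) else 0) ≤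
        c₄ * (2 : ℝ) ^ (-(m * r)) * (r : ℝ) ^ (𝔠 - 1) := by
  classical
  open Stmt2Aux in
  obtain ⟨j₀, hj₀⟩ := hm.1
  simp only at hj₀
  have hmpos : 0 < m := hj₀ ▸ div_pos (hα j₀) (hβ j₀)
  have hmin : ∀ j, m ≤ α j / β j := fun j => hm.2 ⟨j, rfl⟩
  have hPeq : ∀ j, α j / β j = m → α j = m * β j := by
    intro j hj
    rw [div_eq_iff (hβ j).ne'] at hj
    linarith
  have hNgt : ∀ j, ¬(α j / β j = m) → 0 < α j - m * β j := by
    intro j hj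
    have h1 : m < α j / β j := lt_of_le_of_ne (hmin j) (Ne.symm hj)
    have h2 : m * β j < α j := by
      rw [lt_div_iff₀ (hβ j)] at h1
      linarith
    linarith
  have hcard : Fintype.card {j : Fin d // α j / β j = m} = 𝔠 := by
    rw [h𝔠, Fintype.card_subtype]
  have h𝔠pos : 0 < 𝔠 := by
    rw [← hcard]
    exact Fintype.card_pos_iff.2 ⟨⟨j₀, hj₀⟩⟩
  obtain ⟨CM, hCM, hMbound⟩ := Stmt2Aux.auxA' {j : Fin d // α j / β j = m}
    (fun j => β j.1) (fun j => hβ _) m hmpos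
  set GN : ℝ≥0∞ := ∑' τ : {j : Fin d // ¬(α j / β j = m)} → ℕ,
    (2:ℝ≥0∞) ^ (-(∑ j, (τ j : ℝ) * (α j.1 - m * β j.1))) with hGNdef
  have hGNtop : GN ≠ ⊤ := Stmt2Aux.fin_sum_ne_top' _ _ (fun j => hNgt j.1 j.2)
  -- the ENNReal version of the sum
  set Fr : ℕ → (Fin d → ℕ) → ℝ≥0∞ := fun r κ =>
    if (r : ℝ) < (∑ j, (κ j : ℝ) * β j) then (2:ℝ≥0∞) ^ (-(∑ j, (κ j : ℝ) * α j)) else 0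
    with hFrdef
  set eP := Equiv.piEquivPiSubtypeProd (fun j : Fin d => α j / β j = m) (fun _ => ℕ) with hePdef
  have hsplit : ∀ (σ : {j : Fin d // α j / β j = m} → ℕ)
      (τ : {j : Fin d // ¬(α j / β j = m)} → ℕ) (g : Fin d → ℝ),
      (∑ j, ((eP.symm (σ, τ)) j : ℝ) * g j)
        = (∑ j : {j : Fin d // α j / β j = m}, (σ j : ℝ) * g j.1)
          + ∑ j : {j : Fin d // ¬(α j / β j = m)}, (τ j : ℝ) * g j.1 := by
    intro σ τ g
    rw [← Finset.sum_filter_add_sum_filter_not Finset.univ (fun j => α j / β j = m)]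
    congr 1
    · rw [Finset.sum_subtype (p := fun j => α j / β j = m)
        (Finset.univ.filter fun j => α j / β j = m)
        (by simp) (fun j => ((eP.symm (σ, τ)) j : ℝ) * g j)]
      refine Finset.sum_congr rfl fun j _ => ?_
      simp [hePdef, Equiv.piEquivPiSubtypeProd, j.2]
    · rw [Finset.sum_subtype (p := fun j => ¬(α j / β j = m))
        (Finset.univ.filter fun j => ¬(α j / β j = m))
        (by simp) (fun j => ((eP.symm (σ, τ)) j : ℝ) * g j)]
      refine Finset.sum_congr rfl fun j _ => ?_
      simp [hePdef, Equiv.piEquivPiSubtypeProd, j.2]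
  have hup : ∀ r : ℕ, 0 < r → (∑' κ, Fr r κ)
      ≤ (CM * GN) * (2:ℝ≥0∞) ^ (-(m * r)) * ENNReal.ofReal r ^ (𝔠 - 1) := by
    intro r hr
    have hr1 : (1:ℝ) ≤ r := by exact_mod_cast hr
    have keyU : (∑' κ, Fr r κ)
        = ∑' τ : {j : Fin d // ¬(α j / β j = m)} → ℕ,
            ((2:ℝ≥0∞) ^ (-(∑ j, (τ j : ℝ) * α j.1)) *
              ∑' σ : {j : Fin d // α j / β j = m} → ℕ,
                (if (r:ℝ) - (∑ j, (τ j : ℝ) * β j.1) < ∑ j, (σ j : ℝ) * β j.1 then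
                  (2:ℝ≥0∞) ^ (-(m * ∑ j, (σ j : ℝ) * β j.1)) else 0)) := by
      rw [← Equiv.tsum_eq eP.symm, ENNReal.tsum_prod', ENNReal.tsum_comm]
      refine tsum_congr fun τ => ?_
      rw [← ENNReal.tsum_mul_left]
      refine tsum_congr fun σ => ?_
      have hβs := hsplit σ τ β
      have hαs := hsplit σ τ α
      have hαm : (∑ j : {j : Fin d // α j / β j = m}, (σ j : ℝ) * α j.1)
          = m * ∑ j : {j : Fin d // α j / β j = m}, (σ j : ℝ) * β j.1 := by
        rw [Finset.mul_sum]
        refine Finset.sum_congr rfl fun j _ => ?_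
        rw [hPeq j.1 j.2]
        ring
      rw [hFrdef]
      simp only
      rw [hβs, hαs, hαm, mul_ite, mul_zero]
      refine if_congr ⟨fun h => by linarith, fun h => by linarith⟩ ?_ rfl
      rw [← two_rpow_add]
      congr 1
      ring
    rw [keyU]
    have bound : ∀ τ : {j : Fin d // ¬(α j / β j = m)} → ℕ,
        ((2:ℝ≥0∞) ^ (-(∑ j, (τ j : ℝ) * α j.1)) *
          ∑' σ : {j : Fin d // α j / β j = m} → ℕ,
            (if (r:ℝ) - (∑ j, (τ j : ℝ) * β j.1) < ∑ j, (σ j : ℝ) * β j.1 then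
              (2:ℝ≥0∞) ^ (-(m * ∑ j, (σ j : ℝ) * β j.1)) else 0))
        ≤ (CM * ENNReal.ofReal r ^ (𝔠 - 1) * (2:ℝ≥0∞) ^ (-(m * r))) *
            (2:ℝ≥0∞) ^ (-(∑ j, (τ j : ℝ) * (α j.1 - m * β j.1))) := by
      intro τ
      set T : ℝ := ∑ j, (τ j : ℝ) * β j.1 with hT
      set A : ℝ := ∑ j, (τ j : ℝ) * α j.1 with hA
      set B : ℝ := ∑ j, (τ j : ℝ) * (α j.1 - m * β j.1) with hB
      have hBeq : B = A - m * T := by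
        rw [hB, hA, hT, Finset.mul_sum, ← Finset.sum_sub_distrib]
        refine Finset.sum_congr rfl fun j _ => by ring
      have hT0 : 0 ≤ T := Finset.sum_nonneg fun j _ => mul_nonneg (Nat.cast_nonneg _) (hβ j.1).le
      have step1 : (∑' σ : {j : Fin d // α j / β j = m} → ℕ,
            (if (r:ℝ) - T < ∑ j, (σ j : ℝ) * β j.1 then
              (2:ℝ≥0∞) ^ (-(m * ∑ j, (σ j : ℝ) * β j.1)) else 0))
          ≤ CM * (2:ℝ≥0∞) ^ (-(m * max ((r:ℝ) - T) 0)) *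
              ENNReal.ofReal (max ((r:ℝ) - T) 1) ^ (𝔠 - 1) := by
        have := hMbound ((r:ℝ) - T)
        rwa [hcard] at this
      have step2 : ENNReal.ofReal (max ((r:ℝ) - T) 1) ^ (𝔠 - 1)
          ≤ ENNReal.ofReal r ^ (𝔠 - 1) := by
        refine pow_le_pow_left' (ENNReal.ofReal_le_ofReal ?_) _
        exact max_le (by linarith) hr1
      have step3 : (2:ℝ≥0∞) ^ (-A) * (2:ℝ≥0∞) ^ (-(m * max ((r:ℝ) - T) 0))
          ≤ (2:ℝ≥0∞) ^ (-(m * r)) * (2:ℝ≥0∞) ^ (-B) := by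
        rw [← two_rpow_add, ← two_rpow_add]
        refine two_rpow_mono ?_
        have h1 : (r:ℝ) - T ≤ max ((r:ℝ) - T) 0 := le_max_left _ _
        have h2 : m * ((r:ℝ) - T) ≤ m * max ((r:ℝ) - T) 0 :=
          mul_le_mul_of_nonneg_left h1 hmpos.le
        rw [hBeq]
        ring_nf
        nlinarith [h2]
      calc _ ≤ (2:ℝ≥0∞) ^ (-A) * (CM * (2:ℝ≥0∞) ^ (-(m * max ((r:ℝ) - T) 0)) *
            ENNReal.ofReal (max ((r:ℝ) - T) 1) ^ (𝔠 - 1)) := mul_le_mul_right step1 _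
        _ ≤ (2:ℝ≥0∞) ^ (-A) * (CM * (2:ℝ≥0∞) ^ (-(m * max ((r:ℝ) - T) 0)) *
            ENNReal.ofReal r ^ (𝔠 - 1)) :=
          mul_le_mul_right (mul_le_mul_right step2 _) _
        _ = (CM * ENNReal.ofReal r ^ (𝔠 - 1)) *
            ((2:ℝ≥0∞) ^ (-A) * (2:ℝ≥0∞) ^ (-(m * max ((r:ℝ) - T) 0))) := by ring
        _ ≤ (CM * ENNReal.ofReal r ^ (𝔠 - 1)) *
            ((2:ℝ≥0∞) ^ (-(m * r)) * (2:ℝ≥0∞) ^ (-B)) := mul_le_mul_right step3 _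
        _ = _ := by ring
    calc _ ≤ ∑' τ : {j : Fin d // ¬(α j / β j = m)} → ℕ,
          (CM * ENNReal.ofReal r ^ (𝔠 - 1) * (2:ℝ≥0∞) ^ (-(m * r))) *
            (2:ℝ≥0∞) ^ (-(∑ j, (τ j : ℝ) * (α j.1 - m * β j.1))) :=
        ENNReal.tsum_le_tsum bound
      _ = (CM * ENNReal.ofReal r ^ (𝔠 - 1) * (2:ℝ≥0∞) ^ (-(m * r))) * GN :=
        ENNReal.tsum_mul_left
      _ = _ := by ring
  
  -- lower bound
  set M' : Finset (Fin d) := (Finset.univ.filter fun j => α j / β j = m).erase j₀ with hM'def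
  have hj₀mem : j₀ ∈ Finset.univ.filter fun j => α j / β j = m := by simp [hj₀]
  have hM'card : M'.card = 𝔠 - 1 := by
    rw [hM'def, Finset.card_erase_of_mem hj₀mem, ← h𝔠]
  have hj₀M : j₀ ∉ M' := Finset.notMem_erase _ _
  have hM'P : ∀ j ∈ M', α j = m * β j := fun j hj =>
    hPeq j (Finset.mem_filter.1 (Finset.mem_of_mem_erase hj)).2
  set c₀ : ℝ := ∏ j ∈ M', ((d:ℝ) * β j)⁻¹ with hc₀def
  have hc₀pos : 0 < c₀ := Finset.prod_pos fun j _ => by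
    have := hβ j; have : (0:ℝ) < d := by exact_mod_cast hd
    positivity
  set c₃ : ℝ := c₀ * (2:ℝ) ^ (-(m * (2 * β j₀))) with hc₃def
  have hc₃pos : 0 < c₃ := mul_pos hc₀pos (Real.rpow_pos_of_pos two_pos _)
  have hlow : ∀ r : ℕ, 0 < r →
      ENNReal.ofReal (c₃ * (r:ℝ) ^ (𝔠 - 1)) * (2:ℝ≥0∞) ^ (-(m * r)) ≤ ∑' κ, Fr r κ := by
    intro r hr
    have hr1 : (1:ℝ) ≤ r := by exact_mod_cast hr
    have hd' : (0:ℝ) < d := by exact_mod_cast hd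
    set N : Fin d → ℕ := fun j => if j ∈ M' then ⌊(r:ℝ)/((d:ℝ) * β j)⌋₊ else 0 with hNdef
    set A : Finset (Fin d → ℕ) := Fintype.piFinset (fun j => Finset.range (N j + 1)) with hAdef
    have hmemA : ∀ η ∈ A, ∀ j, η j ≤ N j := by
      intro η hη j
      have h1 : η j ∈ Finset.range (N j + 1) := Fintype.mem_piFinset.1 hη j
      have h2 := Finset.mem_range.1 h1
      omega
    have hη0 : ∀ η ∈ A, ∀ j, j ∉ M' → η j = 0 := by
      intro η hη j hj
      have h1 := hmemA η hη j
      rw [hNdef] at h1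
      simp only [if_neg hj] at h1
      omega
    have hTle : ∀ η ∈ A, (∑ j ∈ M', (η j : ℝ) * β j) ≤ r := by
      intro η hη
      calc (∑ j ∈ M', (η j : ℝ) * β j) ≤ ∑ j ∈ M', (r:ℝ)/d := by
            refine Finset.sum_le_sum fun j hj => ?_
            have h1 : (η j : ℝ) ≤ ⌊(r:ℝ)/((d:ℝ) * β j)⌋₊ := by
              have := hmemA η hη j
              rw [hNdef] at this
              simp only [if_pos hj] at this
              exact_mod_cast this
            have hbj := (hβ j).ne'
            have hdne : (d:ℝ) ≠ 0 := ne_of_gt hd'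
            have h2 : (⌊(r:ℝ)/((d:ℝ) * β j)⌋₊ : ℝ) ≤ (r:ℝ)/((d:ℝ) * β j) :=
              Nat.floor_le (div_nonneg (Nat.cast_nonneg r) (by nlinarith [hβ j]))
            have h3 : (η j : ℝ) * β j ≤ (r:ℝ)/((d:ℝ) * β j) * β j :=
              mul_le_mul_of_nonneg_right (le_trans h1 h2) (hβ j).le
            calc (η j : ℝ) * β j ≤ (r:ℝ)/((d:ℝ) * β j) * β j := h3
              _ = (r:ℝ)/d := by
                field_simp
        _ = M'.card * ((r:ℝ)/d) := by rw [Finset.sum_const, nsmul_eq_mul]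
        _ ≤ d * ((r:ℝ)/d) := by
            have h4 : (M'.card : ℝ) ≤ d := by
              have : M'.card ≤ d := le_trans (Finset.card_le_card (Finset.subset_univ _))
                (le_of_eq (by simp))
              exact_mod_cast this
            have h5 : (0:ℝ) ≤ (r:ℝ)/d := by positivity
            nlinarith
        _ = r := by field_simp
    -- the map
    set T : (Fin d → ℕ) → ℝ := fun η => ∑ j ∈ M', (η j : ℝ) * β j with hTdef
    set kf : (Fin d → ℕ) → ℕ := fun η => ⌊((r:ℝ) - T η)/β j₀⌋₊ + 1 with hkfdef
    set Φ : (Fin d → ℕ) → (Fin d → ℕ) := fun η => Function.update η j₀ (kf η) with hΦdef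
    have hT0 : ∀ η, 0 ≤ T η := fun η =>
      Finset.sum_nonneg fun j _ => mul_nonneg (Nat.cast_nonneg _) (hβ j).le
    have hβsum : ∀ η ∈ A, (∑ j, (Φ η j : ℝ) * β j) = (kf η : ℝ) * β j₀ + T η := by
      intro η hη
      rw [← Finset.add_sum_erase Finset.univ _ (Finset.mem_univ j₀)]
      congr 1
      · rw [hΦdef]; simp
      · rw [← Finset.sum_subset (Finset.subset_iff.2 fun {x} hx =>
          Finset.mem_erase.2 ⟨fun h => hj₀M (by rw [← h]; exact hx), Finset.mem_univ _⟩)]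
        · refine Finset.sum_congr rfl fun j hj => ?_
          rw [hΦdef]
          have : j ≠ j₀ := fun h => hj₀M (h ▸ hj)
          simp [Function.update_of_ne this]
        · intro x hx hxM
          have hx0 : x ≠ j₀ := (Finset.mem_erase.1 hx).1
          rw [hΦdef]
          simp [Function.update_of_ne hx0, hη0 η hη x hxM]
    have hβlow : ∀ η ∈ A, (r:ℝ) < ∑ j, (Φ η j : ℝ) * β j := by
      intro η hη
      rw [hβsum η hη]
      have h1 : ((r:ℝ) - T η)/β j₀ < ⌊((r:ℝ) - T η)/β j₀⌋₊ + 1 := Nat.lt_floor_add_one _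
      have h2 : (r:ℝ) - T η ≤ (((r:ℝ) - T η)/β j₀) * β j₀ :=
        le_of_eq (div_mul_cancel₀ _ (hβ j₀).ne').symm
      have h3 : (kf η : ℝ) = (⌊((r:ℝ) - T η)/β j₀⌋₊ : ℝ) + 1 := by
        rw [hkfdef]; push_cast; ring
      have h4 : (((r:ℝ) - T η)/β j₀) * β j₀ < ((⌊((r:ℝ) - T η)/β j₀⌋₊ : ℝ) + 1) * β j₀ :=
        mul_lt_mul_of_pos_right h1 (hβ j₀)
      have h5 : (kf η : ℝ) * β j₀ = ((⌊((r:ℝ) - T η)/β j₀⌋₊ : ℝ) + 1) * β j₀ := by rw [h3]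
      linarith
    have hβhigh : ∀ η ∈ A, (∑ j, (Φ η j : ℝ) * β j) ≤ (r:ℝ) + 2 * β j₀ := by
      intro η hη
      rw [hβsum η hη]
      have hTr := hTle η hη
      have h0 : (0:ℝ) ≤ (r:ℝ) - T η := by rw [hTdef]; simp only; linarith
      have h1 : (⌊((r:ℝ) - T η)/β j₀⌋₊ : ℝ) ≤ ((r:ℝ) - T η)/β j₀ :=
        Nat.floor_le (div_nonneg h0 (hβ j₀).le)
      have h2 : (((r:ℝ) - T η)/β j₀) * β j₀ = (r:ℝ) - T η :=
        div_mul_cancel₀ _ (hβ j₀).ne'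
      have h3 : (kf η : ℝ) = (⌊((r:ℝ) - T η)/β j₀⌋₊ : ℝ) + 1 := by
        rw [hkfdef]; push_cast; ring
      have h4 : (⌊((r:ℝ) - T η)/β j₀⌋₊ : ℝ) * β j₀ ≤ (((r:ℝ) - T η)/β j₀) * β j₀ :=
        mul_le_mul_of_nonneg_right h1 (hβ j₀).le
      have h5 : (kf η : ℝ) * β j₀ = (⌊((r:ℝ) - T η)/β j₀⌋₊ : ℝ) * β j₀ + β j₀ := by
        rw [h3]; ring
      linarith [hβ j₀]
    have hαsum : ∀ η ∈ A, (∑ j, (Φ η j : ℝ) * α j) = m * ∑ j, (Φ η j : ℝ) * β j := by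
      intro η hη
      rw [Finset.mul_sum]
      refine Finset.sum_congr rfl fun j _ => ?_
      by_cases hj : Φ η j = 0
      · simp [hj]
      · have hPj : α j = m * β j := by
          by_cases hjj : j = j₀
          · rw [hjj]; exact hPeq j₀ hj₀
          · refine hM'P j ?_
            by_contra hjM
            exact hj (by rw [hΦdef]; simp [Function.update_of_ne hjj, hη0 η hη j hjM])
        rw [hPj]; ring
    have hterm : ∀ η ∈ A, (2:ℝ≥0∞) ^ (-(m * ((r:ℝ) + 2 * β j₀))) ≤ Fr r (Φ η) := by
      intro η hη
      rw [hFrdef]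
      simp only
      rw [if_pos (hβlow η hη), hαsum η hη]
      refine two_rpow_mono ?_
      have := hβhigh η hη
      nlinarith [hmpos]
    have hinj : Set.InjOn Φ A := by
      intro x hx y hy hxy
      funext j
      by_cases hjj : j = j₀
      · subst hjj
        rw [hη0 x hx _ hj₀M, hη0 y hy _ hj₀M]
      · have h6 := congrFun hxy j
        rw [hΦdef] at h6
        simpa [Function.update_of_ne hjj] using h6
    have hcardA : (A.card : ℝ) = ∏ j ∈ M', ((N j : ℝ) + 1) := by
      rw [hAdef, Fintype.card_piFinset]
      push_cast
      rw [← Finset.prod_subset (Finset.subset_univ M')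
        (fun x _ hx => by rw [hNdef]; simp [if_neg hx])]
      refine Finset.prod_congr rfl fun j hj => by simp
    have hcardlow : c₀ * (r:ℝ) ^ (𝔠 - 1) ≤ (A.card : ℝ) := by
      rw [hcardA]
      have h1 : ∀ j ∈ M', (r:ℝ)/((d:ℝ) * β j) ≤ (N j : ℝ) + 1 := by
        intro j hj
        rw [hNdef]
        simp only [if_pos hj]
        exact le_of_lt (Nat.lt_floor_add_one _)
      calc c₀ * (r:ℝ) ^ (𝔠 - 1) = ∏ j ∈ M', ((r:ℝ)/((d:ℝ) * β j)) := by
            rw [hc₀def, ← hM'card, ← Finset.prod_const (r:ℝ), ← Finset.prod_mul_distrib]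
            refine Finset.prod_congr rfl fun j hj => ?_
            rw [div_eq_mul_inv]
            ring
        _ ≤ ∏ j ∈ M', ((N j : ℝ) + 1) :=
            Finset.prod_le_prod (fun j hj => div_nonneg (Nat.cast_nonneg r)
              (mul_nonneg hd'.le (hβ j).le)) h1
    calc ENNReal.ofReal (c₃ * (r:ℝ) ^ (𝔠 - 1)) * (2:ℝ≥0∞) ^ (-(m * r))
        ≤ (A.card : ℝ≥0∞) * (2:ℝ≥0∞) ^ (-(m * (2 * β j₀))) * (2:ℝ≥0∞) ^ (-(m * r)) := by
          refine mul_le_mul_left ?_ _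
          rw [hc₃def]
          have e0 : c₀ * (2:ℝ)^(-(m * (2 * β j₀))) * (r:ℝ)^(𝔠-1)
              = (c₀ * (r:ℝ)^(𝔠-1)) * (2:ℝ)^(-(m * (2 * β j₀))) := by ring
          rw [e0, ENNReal.ofReal_mul (mul_nonneg hc₀pos.le (pow_nonneg (Nat.cast_nonneg r) _))]
          refine mul_le_mul' ?_ ?_
          · rw [← ENNReal.ofReal_natCast A.card]
            exact ENNReal.ofReal_le_ofReal hcardlow
          · rw [← ENNReal.ofReal_rpow_of_pos two_pos, ENNReal.ofReal_ofNat]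
      _ = (A.card : ℝ≥0∞) * (2:ℝ≥0∞) ^ (-(m * ((r:ℝ) + 2 * β j₀))) := by
          rw [mul_assoc, ← two_rpow_add]
          congr 2
          ring
      _ ≤ ∑ η ∈ A, Fr r (Φ η) := by
          have e2 : (A.card : ℝ≥0∞) * (2:ℝ≥0∞) ^ (-(m * ((r:ℝ) + 2 * β j₀)))
              = ∑ _η ∈ A, (2:ℝ≥0∞) ^ (-(m * ((r:ℝ) + 2 * β j₀))) := by
            rw [Finset.sum_const, nsmul_eq_mul]
          rw [e2]
          exact Finset.sum_le_sum fun η hη => hterm η hη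
      _ = ∑ κ ∈ A.image Φ, Fr r κ := (Finset.sum_image (fun x hx y hy h => hinj hx hy h)).symm
      _ ≤ ∑' κ, Fr r κ := ENNReal.sum_le_tsum _
  
  refine ⟨c₃, (CM * GN).toReal + 1, hc₃pos, by positivity, fun r hr => ?_⟩
  have hE₄top : (CM * GN) * (2:ℝ≥0∞) ^ (-(m * r)) * ENNReal.ofReal r ^ (𝔠 - 1) ≠ ⊤ :=
    ENNReal.mul_ne_top (ENNReal.mul_ne_top (ENNReal.mul_ne_top hCM hGNtop)
      (Stmt2Aux.two_rpow_ne_top _)) (ENNReal.pow_ne_top ENNReal.ofReal_ne_top)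
  have hfin : (∑' κ, Fr r κ) ≠ ⊤ := ne_top_of_le_ne_top hE₄top (hup r hr)
  have htos : (∑' κ : Fin d → ℕ,
      if (r : ℝ) < (∑ j, (κ j : ℝ) * β j) then (2 : ℝ) ^ (-(∑ j, (κ j : ℝ) * α j)) else 0)
      = (∑' κ, Fr r κ).toReal := by
    rw [ENNReal.tsum_toReal_eq]
    · refine tsum_congr fun κ => ?_
      rw [hFrdef]
      simp only
      split
      · rw [← ENNReal.toReal_rpow]
        norm_num
      · simp
    · intro κ
      rw [hFrdef]
      simp only
      split
      · exact Stmt2Aux.two_rpow_ne_top _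
      · exact ENNReal.zero_ne_top
  rw [htos]
  constructor
  · have hL : (ENNReal.ofReal (c₃ * (r:ℝ) ^ (𝔠 - 1)) * (2:ℝ≥0∞) ^ (-(m * r))).toReal
        ≤ (∑' κ, Fr r κ).toReal :=
      ENNReal.toReal_mono hfin (hlow r hr)
    refine le_trans (le_of_eq ?_) hL
    rw [ENNReal.toReal_mul, ENNReal.toReal_ofReal
      (mul_nonneg hc₃pos.le (pow_nonneg (Nat.cast_nonneg r) _)), ← ENNReal.toReal_rpow]
    norm_num
    ring
  · have hU : (∑' κ, Fr r κ).toReal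
        ≤ ((CM * GN) * (2:ℝ≥0∞) ^ (-(m * r)) * ENNReal.ofReal r ^ (𝔠 - 1)).toReal :=
      ENNReal.toReal_mono hE₄top (hup r hr)
    refine le_trans hU ?_
    rw [ENNReal.toReal_mul, ENNReal.toReal_mul, ← ENNReal.toReal_rpow, ENNReal.toReal_pow,
      ENNReal.toReal_ofReal (Nat.cast_nonneg r)]
    norm_num
    have h2 : (0:ℝ) < (2:ℝ)^(-(m*(r:ℝ))) := Real.rpow_pos_of_pos two_pos _
    have h3 : (0:ℝ) ≤ (r:ℝ)^(𝔠-1) := pow_nonneg (Nat.cast_nonneg r) _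
    have h4 : (0:ℝ) ≤ (CM*GN).toReal := ENNReal.toReal_nonneg
    refine mul_le_mul_of_nonneg_right (mul_le_mul_of_nonneg_right (by linarith) h2.le) h3
end

section
/- Let d ∈ ℕ, β ∈ ℝ_+^d, ε > 0, τ ≥ 0, let J ⊆ {1,…,d} be a nonempty subset with complement J′ = {1,…,d} \ J, and set 𝔠 = card J. Then there exists a constant c > 0 depending only on d, β, ε, τ, J such that for every s ∈ ℕ: Σ_{κ ∈ ℤ_+^d, s−1 < (κ,β) ≤ s} 2^{−ε (κ^{J′}, β^{J′})} (1 + (κ^{J′}, β^{J′}))^τ ≤ c · s^{𝔠 − 1}, where (κ^{J′}, β^{J′}) = Σ_{j ∈ J′} κ_j β_j. -/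
open Finset Real

private lemma cardT_aux {β0 a : ℝ} (hβ0 : 0 < β0) (N : ℕ) :
    (((Finset.range N).filter
        (fun n : ℕ => a < (n:ℝ) * β0 ∧ (n:ℝ) * β0 ≤ a + 1)).card : ℝ)
      ≤ 1/β0 + 1 := by
  classical
  set T := (Finset.range N).filter
    (fun n : ℕ => a < (n:ℝ) * β0 ∧ (n:ℝ) * β0 ≤ a + 1) with hT
  rcases T.eq_empty_or_nonempty with h | h
  · rw [h]; simp; positivity
  · set m := T.min' h with hmdef
    set k := T.max' h with hkdef
    have hm : m ∈ T := T.min'_mem h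
    have hk : k ∈ T := T.max'_mem h
    have hmk : m ≤ k := T.min'_le k hk
    have hsub : T ⊆ Finset.Icc m k := fun n hn =>
      Finset.mem_Icc.2 ⟨T.min'_le n hn, T.le_max' n hn⟩
    have hcard : T.card ≤ k - m + 1 := by
      simpa [Nat.card_Icc, Nat.sub_add_comm hmk] using Finset.card_le_card hsub
    have hma : a < (m:ℝ) * β0 := ((Finset.mem_filter.1 hm).2).1
    have hkb : (k:ℝ) * β0 ≤ a + 1 := ((Finset.mem_filter.1 hk).2).2
    have h1 : ((k:ℝ) - m) * β0 ≤ 1 := by nlinarith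
    have h2 : (k:ℝ) - m ≤ 1/β0 := by
      rw [le_div_iff₀ hβ0]; linarith
    have h3 : (T.card : ℝ) ≤ (k:ℝ) - m + 1 := by
      calc (T.card : ℝ) ≤ ((k - m + 1 : ℕ) : ℝ) := by exact_mod_cast hcard
        _ = (k:ℝ) - m + 1 := by push_cast [Nat.cast_sub hmk]; ring
    linarith

private lemma one_add_sum_le_prod_aux {ι : Type*} (s : Finset ι) (a : ι → ℝ)
    (ha : ∀ i ∈ s, 0 ≤ a i) :
    1 + ∑ i ∈ s, a i ≤ ∏ i ∈ s, (1 + a i) := by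
  classical
  induction s using Finset.cons_induction with
  | empty => simp
  | cons i s' hx ih =>
    rw [Finset.sum_cons, Finset.prod_cons]
    have h1 : ∀ i ∈ s', 0 ≤ a i := fun j hj => ha j (Finset.mem_cons_of_mem hj)
    have h2 := ih h1
    have hai : 0 ≤ a i := ha i (Finset.mem_cons_self i s')
    have hs : 0 ≤ ∑ j ∈ s', a j := Finset.sum_nonneg h1
    nlinarith

private lemma summable_h_aux {ε b τ : ℝ} (hε : 0 < ε) (hb : 0 < b) (hτ : 0 ≤ τ) :
    Summable (fun n : ℕ => (2:ℝ) ^ (-(ε * ((n:ℝ) * b))) * (1 + (n:ℝ) * b) ^ τ) := by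
  set r : ℝ := (2:ℝ) ^ (-(ε * b)) with hr
  have hr0 : 0 < r := Real.rpow_pos_of_pos two_pos _
  have hr1 : r < 1 := by
    rw [hr]
    apply Real.rpow_lt_one_of_one_lt_of_neg one_lt_two
    nlinarith
  set m : ℕ := ⌈τ⌉₊ with hm
  have hmaj : ∀ n : ℕ, (2:ℝ) ^ (-(ε * ((n:ℝ) * b))) * (1 + (n:ℝ) * b) ^ τ
      ≤ (1 + b) ^ τ * (((n:ℝ) + 1) ^ m * r ^ n) := by
    intro n
    have h2 : (2:ℝ) ^ (-(ε * ((n:ℝ) * b))) = r ^ n := by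
      rw [hr, ← Real.rpow_natCast ((2:ℝ) ^ (-(ε*b))) n, ← Real.rpow_mul (by norm_num)]
      ring_nf
    have hbase : (0:ℝ) ≤ 1 + (n:ℝ) * b := by positivity
    have hb1 : 1 + (n:ℝ) * b ≤ (1 + b) * (1 + (n:ℝ)) := by
      nlinarith [Nat.cast_nonneg (α := ℝ) n]
    have h3 : (1 + (n:ℝ) * b) ^ τ ≤ ((1 + b) * (1 + (n:ℝ))) ^ τ :=
      Real.rpow_le_rpow hbase hb1 hτ
    have h4 : ((1 + b) * (1 + (n:ℝ))) ^ τ = (1 + b) ^ τ * (1 + (n:ℝ)) ^ τ :=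
      Real.mul_rpow (by positivity) (by positivity)
    have h5 : (1 + (n:ℝ)) ^ τ ≤ (1 + (n:ℝ)) ^ (m:ℝ) := by
      apply Real.rpow_le_rpow_of_exponent_le (by linarith [Nat.cast_nonneg (α := ℝ) n])
      exact_mod_cast Nat.le_ceil τ
    have h6 : (1 + (n:ℝ)) ^ (m:ℝ) = ((n:ℝ) + 1) ^ m := by
      rw [Real.rpow_natCast]; ring_nf
    have hrn : (0:ℝ) ≤ r ^ n := le_of_lt (pow_pos hr0 n)
    calc (2:ℝ) ^ (-(ε * ((n:ℝ) * b))) * (1 + (n:ℝ) * b) ^ τ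
        = (1 + (n:ℝ) * b) ^ τ * r ^ n := by rw [h2]; ring
      _ ≤ ((1 + b) ^ τ * ((n:ℝ) + 1) ^ m) * r ^ n := by
          apply mul_le_mul_of_nonneg_right _ hrn
          calc (1 + (n:ℝ) * b) ^ τ ≤ (1 + b) ^ τ * (1 + (n:ℝ)) ^ τ := by
                rw [← h4]; exact h3
            _ ≤ (1 + b) ^ τ * ((n:ℝ) + 1) ^ m := by
                apply mul_le_mul_of_nonneg_left _ (by positivity)
                rw [← h6]; exact h5
      _ = (1 + b) ^ τ * (((n:ℝ) + 1) ^ m * r ^ n) := by ring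
  have hsum0 : Summable (fun n : ℕ => ((n:ℝ)) ^ m * r ^ n) := by
    have : ‖r‖ < 1 := by rw [Real.norm_eq_abs, abs_of_pos hr0]; exact hr1
    exact summable_pow_mul_geometric_of_norm_lt_one m this
  have hsum1 : Summable (fun n : ℕ => ((n:ℝ) + 1) ^ m * r ^ n) := by
    have h := (summable_nat_add_iff 1).2 hsum0
    have h' : Summable (fun n : ℕ => (((n:ℝ)+1)) ^ m * r ^ (n+1)) := by
      simpa using h
    have h2 : Summable (fun n : ℕ => r⁻¹ * ((((n:ℝ)+1)) ^ m * r ^ (n+1))) :=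
      h'.mul_left _
    apply h2.congr
    intro n
    field_simp
    ring
  have hsum2 : Summable (fun n : ℕ => (1 + b) ^ τ * (((n:ℝ) + 1) ^ m * r ^ n)) :=
    hsum1.mul_left _
  apply Summable.of_nonneg_of_le _ hmaj hsum2
  intro n
  positivity

/-- Lemma 1.2.4.  Let `β ∈ ℝ_+^d`, `ε > 0`, `τ ≥ 0`, let `J ⊆ {1,…,d}` be nonempty with
complement `J′` and `𝔠 = card J`.  Then there is `c > 0` (depending on `d, β, ε, τ, J`)
such that for every `s ∈ ℕ`, `s ≥ 1`:
`Σ_{κ ∈ ℤ_+^d, s−1 < (κ,β) ≤ s} 2^{−ε (κ^{J′},β^{J′})} (1 + (κ^{J′},β^{J′}))^τ ≤ c s^{𝔠−1}`. -/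
theorem stmt_3 (d : ℕ) (β : Fin d → ℝ) (hβ : ∀ j, 0 < β j)
    (ε : ℝ) (hε : 0 < ε) (τ : ℝ) (hτ : 0 ≤ τ)
    (J : Finset (Fin d)) (hJ : J.Nonempty) (𝔠 : ℕ) (h𝔠 : 𝔠 = J.card) :
    ∃ c : ℝ, 0 < c ∧ ∀ s : ℕ, 0 < s →
      (∑' κ : Fin d → ℕ,
        if (s : ℝ) - 1 < (∑ j, (κ j : ℝ) * β j) ∧ (∑ j, (κ j : ℝ) * β j) ≤ (s : ℝ) then
          (2 : ℝ) ^ (-(ε * ∑ j ∈ Jᶜ, (κ j : ℝ) * β j)) *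
            (1 + ∑ j ∈ Jᶜ, (κ j : ℝ) * β j) ^ τ
        else 0) ≤ c * (s : ℝ) ^ (𝔠 - 1) := by
  classical
  obtain ⟨j0, hj0⟩ := hJ
  -- one-dimensional weights
  set h : Fin d → ℕ → ℝ := fun j n =>
    if j ∈ J then 1 else (2:ℝ) ^ (-(ε * ((n:ℝ) * β j))) * (1 + (n:ℝ) * β j) ^ τ
    with hhdef
  have hpos : ∀ j n, 0 < h j n := by
    intro j n
    by_cases hjJ : j ∈ J <;> simp only [hhdef, hjJ, if_true, if_false]
    · norm_num
    · have := hβ j; positivity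
  have hsumm : ∀ j, j ∉ J → Summable (h j) := by
    intro j hjJ
    have := summable_h_aux hε (hβ j) hτ
    simpa only [hhdef, hjJ, if_false] using this
  set c : ℝ := (1/β j0 + 1) *
    ∏ j ∈ Finset.univ.erase j0, (if j ∈ J then 1/β j + 1 else ∑' n, h j n) with hc
  have hβ0 := hβ j0
  have hK0 : (0:ℝ) < 1/β j0 + 1 := by positivity
  have hfacpos : ∀ j, (0:ℝ) < (if j ∈ J then 1/β j + 1 else ∑' n, h j n) := by
    intro j
    by_cases hjJ : j ∈ J <;> simp only [hjJ, if_true, if_false]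
    · have := hβ j; positivity
    · exact Summable.tsum_pos (hsumm j hjJ) (fun n => (hpos j n).le) 0 (hpos j 0)
  have hcpos : 0 < c := by
    apply mul_pos hK0
    exact Finset.prod_pos (fun j _ => hfacpos j)
  refine ⟨c, hcpos, ?_⟩
  intro s hs
  have hs1 : (1:ℝ) ≤ (s:ℝ) := by exact_mod_cast hs
  set M : Fin d → ℕ := fun j => ⌊(s:ℝ)/β j⌋₊ with hM
  set B : Finset (Fin d → ℕ) := Fintype.piFinset (fun j => Finset.range (M j + 1)) with hB
  set f : (Fin d → ℕ) → ℝ := fun κ =>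
    if (s : ℝ) - 1 < (∑ j, (κ j : ℝ) * β j) ∧ (∑ j, (κ j : ℝ) * β j) ≤ (s : ℝ) then
      (2 : ℝ) ^ (-(ε * ∑ j ∈ Jᶜ, (κ j : ℝ) * β j)) *
        (1 + ∑ j ∈ Jᶜ, (κ j : ℝ) * β j) ^ τ
    else 0 with hf
  -- f vanishes outside the box B
  have hsupp : ∀ κ, κ ∉ B → f κ = 0 := by
    intro κ hκ
    simp only [hf]
    rw [if_neg]
    rintro ⟨h1, h2⟩
    rw [hB, Fintype.mem_piFinset] at hκ
    push_neg at hκ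
    obtain ⟨j, hj⟩ := hκ
    rw [Finset.mem_range, not_lt] at hj
    have hj' : M j < κ j := hj
    have h3 : (s:ℝ)/β j < κ j := by
      exact (Nat.floor_lt (div_nonneg (Nat.cast_nonneg s) (hβ j).le)).1 hj'
    have h4 : (s:ℝ) < (κ j : ℝ) * β j := by
      rw [div_lt_iff₀ (hβ j)] at h3
      linarith
    have h5 : (κ j : ℝ) * β j ≤ ∑ i, (κ i : ℝ) * β i := by
      apply Finset.single_le_sum (f := fun i => (κ i : ℝ) * β i)
        (fun i _ => by have := hβ i; positivity) (Finset.mem_univ j)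
    linarith
  rw [tsum_eq_sum hsupp]
  -- fiber over coordinates ≠ j0
  set res : (Fin d → ℕ) → ({j : Fin d // j ≠ j0} → ℕ) := fun κ j => κ j.1 with hres
  set B' : Finset ({j : Fin d // j ≠ j0} → ℕ) :=
    Fintype.piFinset (fun j : {j : Fin d // j ≠ j0} => Finset.range (M j.1 + 1)) with hB'
  have hmaps : ∀ κ ∈ B, res κ ∈ B' := by
    intro κ hκ
    rw [hB, Fintype.mem_piFinset] at hκ
    rw [hB', Fintype.mem_piFinset]
    exact fun j => hκ j.1
  rw [← Finset.sum_fiberwise_of_maps_to hmaps f]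
  set R : ({j : Fin d // j ≠ j0} → ℕ) → ℝ :=
    fun r => ∑ j : {j : Fin d // j ≠ j0}, (r j : ℝ) * β j.1 with hR
  set F : ({j : Fin d // j ≠ j0} → ℕ) → ℝ :=
    fun r => ∏ j : {j : Fin d // j ≠ j0}, h j.1 (r j) with hF
  have herase : ∀ (x : Fin d), x ∈ Finset.univ.erase j0 ↔ x ≠ j0 := by
    intro x; simp
  -- main fiber estimate
  have hinner : ∀ r ∈ B', (∑ κ ∈ B.filter (fun κ => res κ = r), f κ)
      ≤ (1/β j0 + 1) * F r := by
    intro r _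
    have hF0 : 0 ≤ F r := Finset.prod_nonneg (fun j _ => (hpos j.1 (r j)).le)
    -- the slab for the j0 coordinate
    set T : Finset ℕ := (Finset.range (M j0 + 1)).filter
      (fun n : ℕ => (s:ℝ) - 1 - R r < (n:ℝ) * β j0 ∧ (n:ℝ) * β j0 ≤ ((s:ℝ) - 1 - R r) + 1)
      with hT
    -- pointwise bound on fibers
    have hptwise : ∀ κ ∈ B.filter (fun κ => res κ = r),
        f κ ≤ if (s : ℝ) - 1 < (∑ j, (κ j : ℝ) * β j) ∧ (∑ j, (κ j : ℝ) * β j) ≤ (s : ℝ)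
          then F r else 0 := by
      intro κ hκ
      obtain ⟨hκB, hκr⟩ := Finset.mem_filter.1 hκ
      simp only [hf]
      by_cases hcond : (s : ℝ) - 1 < (∑ j, (κ j : ℝ) * β j) ∧
          (∑ j, (κ j : ℝ) * β j) ≤ (s : ℝ)
      · rw [if_pos hcond, if_pos hcond]
        -- weight ≤ F r
        have hA : (2 : ℝ) ^ (-(ε * ∑ j ∈ Jᶜ, (κ j : ℝ) * β j))
            = ∏ j ∈ Jᶜ, (2:ℝ) ^ (-(ε * ((κ j : ℝ) * β j))) := by
          rw [Finset.mul_sum, ← Finset.sum_neg_distrib]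
          exact Real.rpow_sum_of_pos two_pos _ _
        have hBb : (1 + ∑ j ∈ Jᶜ, (κ j : ℝ) * β j) ^ τ
            ≤ ∏ j ∈ Jᶜ, (1 + (κ j : ℝ) * β j) ^ τ := by
          have h1 : (1:ℝ) + ∑ j ∈ Jᶜ, (κ j : ℝ) * β j
              ≤ ∏ j ∈ Jᶜ, (1 + (κ j : ℝ) * β j) :=
            one_add_sum_le_prod_aux _ _ (fun j _ => by have := hβ j; positivity)
          have h2 : ((1:ℝ) + ∑ j ∈ Jᶜ, (κ j : ℝ) * β j) ^ τ
              ≤ (∏ j ∈ Jᶜ, (1 + (κ j : ℝ) * β j)) ^ τ := by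
            apply Real.rpow_le_rpow _ h1 hτ
            have : (0:ℝ) ≤ ∑ j ∈ Jᶜ, (κ j : ℝ) * β j :=
              Finset.sum_nonneg (fun j _ => by have := hβ j; positivity)
            linarith
          rw [← Real.finset_prod_rpow _ _ (fun j _ => by have := hβ j; positivity)] at h2
          exact h2
        have hstep : (2 : ℝ) ^ (-(ε * ∑ j ∈ Jᶜ, (κ j : ℝ) * β j)) *
              (1 + ∑ j ∈ Jᶜ, (κ j : ℝ) * β j) ^ τ
            ≤ ∏ j ∈ Jᶜ, h j (κ j) := by
          have hprod : ∏ j ∈ Jᶜ, ((2:ℝ) ^ (-(ε * ((κ j : ℝ) * β j))) *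
              (1 + (κ j : ℝ) * β j) ^ τ) = ∏ j ∈ Jᶜ, h j (κ j) := by
            apply Finset.prod_congr rfl
            intro j hjc
            rw [Finset.mem_compl] at hjc
            simp only [hhdef, hjc, if_false]
          rw [← hprod, Finset.prod_mul_distrib, hA]
          apply mul_le_mul_of_nonneg_left hBb
          exact Finset.prod_nonneg (fun j _ =>
            (Real.rpow_pos_of_pos two_pos _).le)
        have heq2 : ∏ j ∈ Jᶜ, h j (κ j) = F r := by
          have hsubJ : Jᶜ ⊆ Finset.univ.erase j0 := by
            intro j hjc
            rw [Finset.mem_compl] at hjc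
            rw [Finset.mem_erase]
            exact ⟨fun hh => hjc (hh ▸ hj0), Finset.mem_univ j⟩
          have h1 : ∏ j ∈ Jᶜ, h j (κ j) = ∏ j ∈ Finset.univ.erase j0, h j (κ j) := by
            apply Finset.prod_subset hsubJ
            intro j _ hjc
            rw [Finset.mem_compl, not_not] at hjc
            simp only [hhdef, hjc, if_true]
          rw [h1, Finset.prod_subtype (Finset.univ.erase j0) herase
            (fun j => h j (κ j))]
          simp only [hF]
          apply Finset.prod_congr rfl
          intro j _
          simp only [← hκr, hres]
        calc (2 : ℝ) ^ (-(ε * ∑ j ∈ Jᶜ, (κ j : ℝ) * β j)) *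
              (1 + ∑ j ∈ Jᶜ, (κ j : ℝ) * β j) ^ τ
            ≤ ∏ j ∈ Jᶜ, h j (κ j) := hstep
          _ = F r := heq2
      · rw [if_neg hcond, if_neg hcond]
    have hsum1 : (∑ κ ∈ B.filter (fun κ => res κ = r), f κ)
        ≤ ((B.filter (fun κ => res κ = r)).filter
            (fun κ => (s : ℝ) - 1 < (∑ j, (κ j : ℝ) * β j) ∧
              (∑ j, (κ j : ℝ) * β j) ≤ (s : ℝ))).card • F r := by
      calc (∑ κ ∈ B.filter (fun κ => res κ = r), f κ)
          ≤ ∑ κ ∈ B.filter (fun κ => res κ = r),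
            (if (s : ℝ) - 1 < (∑ j, (κ j : ℝ) * β j) ∧
              (∑ j, (κ j : ℝ) * β j) ≤ (s : ℝ) then F r else 0) :=
            Finset.sum_le_sum hptwise
        _ = _ := by rw [← Finset.sum_filter, Finset.sum_const]
    -- cardinality of the good set ≤ card T
    have hcardle : ((B.filter (fun κ => res κ = r)).filter
        (fun κ => (s : ℝ) - 1 < (∑ j, (κ j : ℝ) * β j) ∧
          (∑ j, (κ j : ℝ) * β j) ≤ (s : ℝ))).card ≤ T.card := by
      apply Finset.card_le_card_of_injOn (fun κ => κ j0)
      · intro κ hκ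
        obtain ⟨hκ1, hκcond⟩ := Finset.mem_filter.1 hκ
        obtain ⟨hκB, hκr⟩ := Finset.mem_filter.1 hκ1
        rw [hT, Finset.mem_coe, Finset.mem_filter, Finset.mem_range]
        have hκj0 : κ j0 < M j0 + 1 := by
          rw [hB, Fintype.mem_piFinset] at hκB
          have := hκB j0
          rwa [Finset.mem_range] at this
        refine ⟨hκj0, ?_, ?_⟩
        · have hsplit : (∑ j, (κ j : ℝ) * β j)
              = (κ j0 : ℝ) * β j0 + R r := by
            rw [← Finset.add_sum_erase Finset.univ (fun j => (κ j : ℝ) * β j)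
              (Finset.mem_univ j0)]
            congr 1
            rw [Finset.sum_subtype (Finset.univ.erase j0) herase
              (fun j => (κ j : ℝ) * β j)]
            simp only [hR]
            apply Finset.sum_congr rfl
            intro j _
            simp only [← hκr, hres]
          have := hκcond.1
          rw [hsplit] at this
          linarith
        · have hsplit : (∑ j, (κ j : ℝ) * β j)
              = (κ j0 : ℝ) * β j0 + R r := by
            rw [← Finset.add_sum_erase Finset.univ (fun j => (κ j : ℝ) * β j)
              (Finset.mem_univ j0)]
            congr 1
            rw [Finset.sum_subtype (Finset.univ.erase j0) herase
              (fun j => (κ j : ℝ) * β j)]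
            simp only [hR]
            apply Finset.sum_congr rfl
            intro j _
            simp only [← hκr, hres]
          have := hκcond.2
          rw [hsplit] at this
          linarith
      · intro κ hκ κ' hκ' heq
        obtain ⟨hκ1, _⟩ := Finset.mem_filter.1 (Finset.mem_coe.1 hκ)
        obtain ⟨hκ1', _⟩ := Finset.mem_filter.1 (Finset.mem_coe.1 hκ')
        obtain ⟨_, hκr⟩ := Finset.mem_filter.1 hκ1
        obtain ⟨_, hκr'⟩ := Finset.mem_filter.1 hκ1'
        funext j
        by_cases hjj0 : j = j0
        · rw [hjj0]; exact heq
        · have h1 := congrFun hκr ⟨j, hjj0⟩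
          have h2 := congrFun hκr' ⟨j, hjj0⟩
          simp only [hres] at h1 h2
          rw [h1, h2]
    have hTcard : (T.card : ℝ) ≤ 1/β j0 + 1 := cardT_aux hβ0 (M j0 + 1)
    calc (∑ κ ∈ B.filter (fun κ => res κ = r), f κ)
        ≤ ((B.filter (fun κ => res κ = r)).filter
            (fun κ => (s : ℝ) - 1 < (∑ j, (κ j : ℝ) * β j) ∧
              (∑ j, (κ j : ℝ) * β j) ≤ (s : ℝ))).card • F r := hsum1
      _ = (((B.filter (fun κ => res κ = r)).filter
            (fun κ => (s : ℝ) - 1 < (∑ j, (κ j : ℝ) * β j) ∧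
              (∑ j, (κ j : ℝ) * β j) ≤ (s : ℝ))).card : ℝ) * F r := by
          rw [nsmul_eq_mul]
      _ ≤ (T.card : ℝ) * F r := by
          apply mul_le_mul_of_nonneg_right _ hF0
          exact_mod_cast hcardle
      _ ≤ (1/β j0 + 1) * F r := mul_le_mul_of_nonneg_right hTcard hF0
  -- sum the fiber estimates
  have hstep2 : (∑ r ∈ B', ∑ κ ∈ B.filter (fun κ => res κ = r), f κ)
      ≤ (1/β j0 + 1) * ∑ r ∈ B', F r := by
    rw [Finset.mul_sum]
    exact Finset.sum_le_sum hinner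
  -- factorize the sum of F over the product set
  have hfact : (∑ r ∈ B', F r)
      = ∏ j : {j : Fin d // j ≠ j0}, ∑ n ∈ Finset.range (M j.1 + 1), h j.1 n := by
    simp only [hB', hF]
    exact (Finset.prod_univ_sum _ _).symm
  -- bound each factor
  have hfacbound : ∀ j : {j : Fin d // j ≠ j0},
      (∑ n ∈ Finset.range (M j.1 + 1), h j.1 n)
        ≤ (if j.1 ∈ J then 1/β j.1 + 1 else ∑' n, h j.1 n) *
            (s:ℝ) ^ (if j.1 ∈ J then 1 else 0) := by
    intro j
    by_cases hjJ : j.1 ∈ J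
    · simp only [hjJ, if_true, pow_one]
      have h1 : (∑ n ∈ Finset.range (M j.1 + 1), h j.1 n) = (M j.1 : ℝ) + 1 := by
        have : ∀ n ∈ Finset.range (M j.1 + 1), h j.1 n = 1 := by
          intro n _; simp only [hhdef, hjJ, if_true]
        rw [Finset.sum_congr rfl this, Finset.sum_const, Finset.card_range,
          nsmul_eq_mul, mul_one]
        push_cast; ring
      rw [h1]
      have h2 : (M j.1 : ℝ) ≤ (s:ℝ) / β j.1 :=
        Nat.floor_le (by have := hβ j.1; positivity)
      have h3 : (s:ℝ)/β j.1 + 1 ≤ (1/β j.1 + 1) * s := by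
        have hb := hβ j.1
        rw [div_eq_mul_one_div]
        nlinarith
      linarith
    · simp only [hjJ, if_false, pow_zero, mul_one]
      exact Summable.sum_le_tsum _ (fun n _ => (hpos j.1 n).le) (hsumm j.1 hjJ)
  -- combine
  have hsum3 : (∏ j : {j : Fin d // j ≠ j0}, ∑ n ∈ Finset.range (M j.1 + 1), h j.1 n)
      ≤ ∏ j : {j : Fin d // j ≠ j0},
          ((if j.1 ∈ J then 1/β j.1 + 1 else ∑' n, h j.1 n) *
            (s:ℝ) ^ (if j.1 ∈ J then 1 else 0)) := by
    apply Finset.prod_le_prod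
    · intro j _
      exact Finset.sum_nonneg (fun n _ => (hpos j.1 n).le)
    · intro j _
      exact hfacbound j
  have hsplitprod : (∏ j : {j : Fin d // j ≠ j0},
        ((if j.1 ∈ J then 1/β j.1 + 1 else ∑' n, h j.1 n) *
          (s:ℝ) ^ (if j.1 ∈ J then 1 else 0)))
      = (∏ j ∈ Finset.univ.erase j0, (if j ∈ J then 1/β j + 1 else ∑' n, h j n)) *
          (s:ℝ) ^ (𝔠 - 1) := by
    rw [Finset.prod_mul_distrib]
    congr 1
    · rw [← Finset.prod_subtype (Finset.univ.erase j0) herase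
        (fun j => if j ∈ J then 1/β j + 1 else ∑' n, h j n)]
    · rw [Finset.prod_pow_eq_pow_sum]
      congr 1
      have h1 : (∑ j : {j : Fin d // j ≠ j0}, (if j.1 ∈ J then 1 else 0))
          = ∑ j ∈ Finset.univ.erase j0, (if j ∈ J then 1 else 0) := by
        rw [← Finset.sum_subtype (Finset.univ.erase j0) herase
          (fun j => if j ∈ J then (1:ℕ) else 0)]
      rw [h1, Finset.sum_boole]
      have h2 : (Finset.univ.erase j0).filter (fun j => j ∈ J) = J.erase j0 := by
        ext x
        simp [Finset.mem_erase, Finset.mem_filter, and_comm]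
      rw [h2, Finset.card_erase_of_mem hj0, h𝔠]
      simp
  calc (∑ r ∈ B', ∑ κ ∈ B.filter (fun κ => res κ = r), f κ)
      ≤ (1/β j0 + 1) * ∑ r ∈ B', F r := hstep2
    _ = (1/β j0 + 1) *
        ∏ j : {j : Fin d // j ≠ j0}, ∑ n ∈ Finset.range (M j.1 + 1), h j.1 n := by
        rw [hfact]
    _ ≤ (1/β j0 + 1) * ∏ j : {j : Fin d // j ≠ j0},
          ((if j.1 ∈ J then 1/β j.1 + 1 else ∑' n, h j.1 n) *
            (s:ℝ) ^ (if j.1 ∈ J then 1 else 0)) := by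
        apply mul_le_mul_of_nonneg_left hsum3 hK0.le
    _ = c * (s:ℝ) ^ (𝔠 - 1) := by
        rw [hsplitprod, hc]; ring
end
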